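/- arXiv:1002.3959 — 12 statements merged into one kernel-verified Lean document; each statement's English description precedes it below -/
import Mathlib

section
/- The map π : D(M,θ) → ∏_{k∈ℤ/pℤ} C(M_θ, ℂ), defined by letting the k-th component of π(a) be the restriction to M_θ of the function x ↦ Σ_{j∈ℤ/pℤ} ω^{jk} a_{0,j}(x), is a surjective unital star-algebra homomorphism whose kernel is exactly D(M₀,θ) = {a ∈ D(M,θ) : every entry of a vanishes at every point of M_θ}. -/
open Matrix

/-- `DPred p θ a` says that the matrix `a ∈ M_p(C(M,ℂ))` (indexed by `ℤ/pℤ`) lies in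
`D(M,θ)`, i.e. `a_{i+1,j+1} = a_{i,j} ∘ θ`. -/
def DPred {M : Type*} [TopologicalSpace M] (p : ℕ) (θ : M → M)
    (a : Matrix (ZMod p) (ZMod p) C(M, ℂ)) : Prop :=
  ∀ i j : ZMod p, ∀ x : M, a (i + 1) (j + 1) x = a i j (θ x)

section Helpers
variable {p : ℕ} [NeZero p] {ω : ℂ}

private lemma hvadd (hω1 : ω ^ p = 1) (m n : ZMod p) :
    ω ^ (m + n).val = ω ^ m.val * ω ^ n.val := by
  rw [ZMod.val_add, ← pow_eq_pow_mod _ hω1, pow_add]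

private lemma horth (hprim : IsPrimitiveRoot ω p) (m : ZMod p) :
    ∑ j : ZMod p, ω ^ ((j * m).val) = if m = 0 then (p : ℂ) else 0 := by
  have hω1 : ω ^ p = 1 := hprim.pow_eq_one
  by_cases hm : m = 0
  · simp [hm, ZMod.card, Finset.card_univ]
  · rw [if_neg hm]
    have hshift : ω ^ m.val * ∑ j : ZMod p, ω ^ ((j * m).val)
        = ∑ j : ZMod p, ω ^ ((j * m).val) := by
      rw [Finset.mul_sum]
      refine Eq.trans (Finset.sum_congr rfl fun j _ => (hvadd hω1 m (j * m)).symm) ?_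
      exact Fintype.sum_equiv (Equiv.addRight (1 : ZMod p))
        (fun j => ω ^ ((m + j * m).val)) (fun j => ω ^ ((j * m).val))
        (fun j => by
          show ω ^ (m + j * m).val = ω ^ ((j + 1) * m).val
          ring_nf)
    have hne : ω ^ m.val ≠ 1 := hprim.pow_ne_one_of_pos_of_lt
      (ZMod.val_pos.mpr hm).ne' (ZMod.val_lt m)
    have h2 := sub_eq_zero.mpr hshift
    rw [← sub_one_mul] at h2
    rcases mul_eq_zero.mp h2 with h | h
    · exact absurd (sub_eq_zero.mp h) hne
    · exact h
end Helpers

/-- the map `π : D(M,θ) → ∏_{k ∈ ℤ/pℤ} C(M_θ, ℂ)`, whose `k`-th component of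
`π(a)` is `x ↦ ∑_j ω^{jk} a_{0,j}(x)` restricted to `M_θ`, is a surjective unital
star-algebra homomorphism with kernel `D(M₀,θ) = {a ∈ D(M,θ) : a|_{M_θ} = 0}`. -/
theorem stmt_3 {M : Type*} [TopologicalSpace M] [CompactSpace M] [T2Space M]
    (p : ℕ) (hp : p.Prime) [NeZero p] (θ : M ≃ₜ M) (hθ : ∀ x, (⇑θ)^[p] x = x)
    (ω : ℂ) (hω : ω = Complex.exp (2 * Real.pi * Complex.I / p))
    (π' : Matrix (ZMod p) (ZMod p) C(M, ℂ) → ZMod p → {x : M // θ x = x} → ℂ)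
    (hπ : ∀ a k x, π' a k x = ∑ j : ZMod p, ω ^ (j * k).val * a 0 j x.1) :
    -- π is a unital star-algebra homomorphism on D(M,θ):
    ((∀ a b, DPred p θ a → DPred p θ b →
        ∀ k x, π' (a + b) k x = π' a k x + π' b k x) ∧
     (∀ a b, DPred p θ a → DPred p θ b →
        ∀ k x, π' (a * b) k x = π' a k x * π' b k x) ∧
     (∀ (c : ℂ) a, DPred p θ a → ∀ k x, π' (c • a) k x = c * π' a k x) ∧
     (∀ a, DPred p θ a → ∀ k x, π' (star a) k x = starRingEnd ℂ (π' a k x)) ∧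
     (∀ k x, π' 1 k x = 1)) ∧
    -- π is surjective onto ∏_{k ∈ ℤ/pℤ} C(M_θ, ℂ):
    (∀ f : ZMod p → C({x : M // θ x = x}, ℂ),
      ∃ a, DPred p θ a ∧ ∀ k x, π' a k x = f k x) ∧
    -- the kernel of π is exactly D(M₀,θ):
    (∀ a, DPred p θ a →
      ((∀ k x, π' a k x = 0) ↔ ∀ i j : ZMod p, ∀ x : M, θ x = x → a i j x = 0)) := by
  haveI : Fact (1 < p) := ⟨hp.one_lt⟩
  have hprim : IsPrimitiveRoot ω p := hω ▸ Complex.isPrimitiveRoot_exp p (NeZero.ne p)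
  have hω1 : ω ^ p = 1 := hprim.pow_eq_one
  have hpC : (p : ℂ) ≠ 0 := Nat.cast_ne_zero.mpr (NeZero.ne p)
  have hconjω : (starRingEnd ℂ) ω * ω = 1 := by
    rw [hω, ← Complex.exp_conj, ← Complex.exp_add]
    rw [show (starRingEnd ℂ) (2 * (Real.pi : ℂ) * Complex.I / p)
          + 2 * (Real.pi : ℂ) * Complex.I / p = 0 by
      simp [map_div₀, Complex.conj_I, map_ofNat]
      ring]
    exact Complex.exp_zero
  have hconjpow : ∀ m : ZMod p, (starRingEnd ℂ) (ω ^ m.val) = ω ^ (-m).val := by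
    intro m
    have h1 : ω ^ m.val * ω ^ (-m).val = 1 := by
      rw [← hvadd hω1]; simp
    have h2 : (starRingEnd ℂ) (ω ^ m.val) * ω ^ m.val = 1 := by
      rw [map_pow, ← mul_pow, hconjω, one_pow]
    have e1 : (starRingEnd ℂ) (ω ^ m.val) = (ω ^ m.val)⁻¹ :=
      eq_inv_of_mul_eq_one_left h2
    have e2 : (ω ^ m.val)⁻¹ = ω ^ (-m).val := inv_eq_of_mul_eq_one_right h1
    rw [e1, e2]
  -- iterate lemmas
  have hmulit : ∀ (k : ℕ) (x : M), (⇑θ)^[p * k] x = x := by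
    intro k
    induction k with
    | zero => simp
    | succ n ih =>
      intro x
      rw [Nat.mul_succ, Function.iterate_add_apply]
      rw [show (⇑θ)^[p] x = x from hθ x]
      exact ih x
  have hiter : ∀ (n : ℕ) (x : M), (⇑θ)^[n % p] x = (⇑θ)^[n] x := by
    intro n x
    conv_rhs => rw [← Nat.div_add_mod n p]
    rw [Function.iterate_add_apply, hmulit]
  have hsucc : ∀ (i : ZMod p) (x : M), (⇑θ)^[(i + 1).val] x = (⇑θ)^[i.val] (θ x) := by
    intro i x
    rw [ZMod.val_add, ZMod.val_one, hiter, Function.iterate_succ_apply]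
  -- shift lemma
  have hshift : ∀ a, DPred p θ a → ∀ x : M, θ x = x →
      ∀ i j : ZMod p, a i j x = a 0 (j - i) x := by
    intro a ha x hx
    have key : ∀ n : ℕ, ∀ j : ZMod p, a (n : ZMod p) j x = a 0 (j - (n : ZMod p)) x := by
      intro n
      induction n with
      | zero => intro j; simp
      | succ n ih =>
        intro j
        push_cast
        have h1 : a ((n : ZMod p) + 1) j x = a (n : ZMod p) (j - 1) (θ x) := by
          have h2 := ha (n : ZMod p) (j - 1) x
          rwa [sub_add_cancel] at h2
        rw [h1, hx, ih (j - 1),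
          show j - 1 - (n : ZMod p) = j - ((n : ZMod p) + 1) by ring]
    intro i j
    have h3 := key i.val j
    rwa [ZMod.natCast_rightInverse i] at h3
  refine ⟨⟨?_, ?_, ?_, ?_, ?_⟩, ?_, ?_⟩
  -- additivity
  · intro a b _ _ k x
    simp only [hπ, Matrix.add_apply, ContinuousMap.add_apply, mul_add,
      Finset.sum_add_distrib]
  -- multiplicativity
  · intro a b ha hb k x
    obtain ⟨x, hx⟩ := x
    simp only [hπ]
    have hmul : ∀ j : ZMod p, (a * b) 0 j x = ∑ l : ZMod p, a 0 l x * b 0 (j - l) x := by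
      intro j
      simp only [Matrix.mul_apply, ContinuousMap.sum_apply, ContinuousMap.mul_apply]
      exact Finset.sum_congr rfl fun l _ => by rw [hshift b hb x hx l j]
    calc ∑ j : ZMod p, ω ^ (j * k).val * (a * b) 0 j x
        = ∑ j : ZMod p, ∑ l : ZMod p,
            ω ^ (j * k).val * (a 0 l x * b 0 (j - l) x) := by
          simp only [hmul, Finset.mul_sum]
      _ = ∑ l : ZMod p, ∑ j : ZMod p,
            ω ^ (j * k).val * (a 0 l x * b 0 (j - l) x) := Finset.sum_comm
      _ = ∑ l : ZMod p, ∑ m : ZMod p,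
            ω ^ ((l + m) * k).val * (a 0 l x * b 0 m x) := by
          refine Finset.sum_congr rfl fun l _ => ?_
          refine Fintype.sum_equiv (Equiv.subRight l) _ _ fun j => ?_
          show ω ^ (j * k).val * (a 0 l x * b 0 (j - l) x)
              = ω ^ ((l + (j - l)) * k).val * (a 0 l x * b 0 (j - l) x)
          rw [show l + (j - l) = j by ring]
      _ = (∑ j : ZMod p, ω ^ (j * k).val * a 0 j x)
            * ∑ j : ZMod p, ω ^ (j * k).val * b 0 j x := by
          rw [Finset.sum_mul_sum]
          refine Finset.sum_congr rfl fun l _ => Finset.sum_congr rfl fun m _ => ?_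
          rw [show (l + m) * k = l * k + m * k by ring, hvadd hω1]
          ring
  -- scalar multiplication
  · intro c a _ k x
    simp only [hπ, Matrix.smul_apply, ContinuousMap.smul_apply, smul_eq_mul,
      Finset.mul_sum]
    exact Finset.sum_congr rfl fun j _ => by ring
  -- star
  · intro a ha k x
    obtain ⟨x, hx⟩ := x
    simp only [hπ, map_sum]
    have hstar : ∀ j : ZMod p, (star a) 0 j x = (starRingEnd ℂ) (a 0 (-j) x) := by
      intro j
      rw [Matrix.star_apply, ContinuousMap.star_apply, Complex.star_def,
        hshift a ha x hx j 0, zero_sub]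
    calc ∑ j : ZMod p, ω ^ (j * k).val * (star a) 0 j x
        = ∑ j : ZMod p, ω ^ (j * k).val * (starRingEnd ℂ) (a 0 (-j) x) := by
          exact Finset.sum_congr rfl fun j _ => by rw [hstar]
      _ = ∑ j : ZMod p, ω ^ ((-j) * k).val * (starRingEnd ℂ) (a 0 j x) := by
          refine Fintype.sum_equiv (Equiv.neg (ZMod p)) _ _ fun j => ?_
          show ω ^ (j * k).val * (starRingEnd ℂ) (a 0 (-j) x)
              = ω ^ ((-(-j)) * k).val * (starRingEnd ℂ) (a 0 (-j) x)
          rw [neg_neg]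
      _ = ∑ j : ZMod p, (starRingEnd ℂ) (ω ^ (j * k).val)
            * (starRingEnd ℂ) (a 0 j x) := by
          refine Finset.sum_congr rfl fun j _ => ?_
          rw [hconjpow (j * k), neg_mul]
      _ = ∑ j : ZMod p, (starRingEnd ℂ) (ω ^ (j * k).val * a 0 j x) :=
          Finset.sum_congr rfl fun j _ => (RingHom.map_mul (starRingEnd ℂ) _ _).symm
  -- unit
  · intro k x
    rw [hπ, Finset.sum_eq_single (0 : ZMod p)]
    · simp [Matrix.one_apply]
    · intro j _ hj
      rw [Matrix.one_apply_ne (Ne.symm hj)]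
      simp
    · simp
  -- surjectivity
  · intro f
    have hSclosed : IsClosed {x : M | θ x = x} := isClosed_eq θ.continuous continuous_id
    have hext : ∀ j : ZMod p, ∃ h : C(M, ℂ), ∀ y : {x : M // θ x = x},
        h y.1 = (p : ℂ)⁻¹ * ∑ l : ZMod p, ω ^ ((-j) * l).val * f l y := by
      intro j
      obtain ⟨h, hh⟩ := ContinuousMap.exists_restrict_eq (Y := ℂ) hSclosed
        ((p : ℂ)⁻¹ • ∑ l : ZMod p, ω ^ ((-j) * l).val • f l)
      refine ⟨h, fun y => ?_⟩
      have h1 : h y.1 = ((p : ℂ)⁻¹ • ∑ l : ZMod p, ω ^ ((-j) * l).val • f l) y := by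
        rw [← hh]; rfl
      rw [h1]
      simp only [ContinuousMap.smul_apply, ContinuousMap.sum_apply, smul_eq_mul]
    choose h hh using hext
    refine ⟨fun i j => (h (j - i)).comp ⟨(⇑θ)^[i.val], θ.continuous.iterate _⟩, ?_, ?_⟩
    · intro i j x
      show h (j + 1 - (i + 1)) ((⇑θ)^[(i + 1).val] x) = h (j - i) ((⇑θ)^[i.val] (θ x))
      rw [add_sub_add_right_eq_sub, hsucc i x]
    · intro k x
      refine (hπ _ k x).trans ?_
      have hA : ∀ j : ZMod p,
          ((h (j - 0)).comp ⟨(⇑θ)^[(0 : ZMod p).val], θ.continuous.iterate _⟩) x.1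
          = (p : ℂ)⁻¹ * ∑ l : ZMod p, ω ^ ((-j) * l).val * f l x := by
        intro j
        show h (j - 0) ((⇑θ)^[(0 : ZMod p).val] x.1) = _
        rw [sub_zero, ZMod.val_zero, Function.iterate_zero_apply]
        exact hh j x
      calc ∑ j : ZMod p, ω ^ (j * k).val
            * ((h (j - 0)).comp ⟨(⇑θ)^[(0 : ZMod p).val], θ.continuous.iterate _⟩) x.1
          = (p : ℂ)⁻¹ * ∑ j : ZMod p, ∑ l : ZMod p,
              ω ^ (j * k).val * (ω ^ ((-j) * l).val * f l x) := by
            simp only [hA]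
            rw [Finset.mul_sum]
            refine Finset.sum_congr rfl fun j _ => ?_
            rw [← Finset.mul_sum]
            ring
        _ = (p : ℂ)⁻¹ * ∑ l : ZMod p, (∑ j : ZMod p, ω ^ ((j * (k - l)).val)) * f l x := by
            rw [Finset.sum_comm]
            congr 1
            refine Finset.sum_congr rfl fun l _ => ?_
            rw [Finset.sum_mul]
            refine Finset.sum_congr rfl fun j _ => ?_
            rw [← mul_assoc, ← hvadd hω1, show j * k + (-j) * l = j * (k - l) by ring]
        _ = f k x := by
            rw [show ∑ l : ZMod p, (∑ j : ZMod p, ω ^ ((j * (k - l)).val)) * f l x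
                = ∑ l : ZMod p, (if l = k then (p : ℂ) * f l x else 0) from
              Finset.sum_congr rfl fun l _ => by
                rw [horth hprim]
                rcases eq_or_ne l k with rfl | hne
                · simp
                · simp [sub_ne_zero.mpr (Ne.symm hne), hne]]
            rw [Finset.sum_ite_eq' Finset.univ k]
            simp [inv_mul_cancel_left₀ hpC]
  -- kernel
  · intro a ha
    constructor
    · intro h0 i j x hx
      have key : ∀ k : ZMod p, ∑ l : ZMod p, ω ^ ((l * k).val) * a 0 l x = 0 := by
        intro k
        have h1 := h0 k ⟨x, hx⟩
        rwa [hπ] at h1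
      have hzero : ∀ j' : ZMod p, a 0 j' x = 0 := by
        intro j'
        have hc : ∑ k : ZMod p, ω ^ (((-j') * k).val)
            * ∑ l : ZMod p, ω ^ ((l * k).val) * a 0 l x = 0 := by
          simp only [key, mul_zero, Finset.sum_const_zero]
        have hc2 : ∑ k : ZMod p, ω ^ (((-j') * k).val)
            * ∑ l : ZMod p, ω ^ ((l * k).val) * a 0 l x = (p : ℂ) * a 0 j' x := by
          calc ∑ k : ZMod p, ω ^ (((-j') * k).val)
                * ∑ l : ZMod p, ω ^ ((l * k).val) * a 0 l x
              = ∑ k : ZMod p, ∑ l : ZMod p, ω ^ ((k * (l - j')).val) * a 0 l x := by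
                refine Finset.sum_congr rfl fun k _ => ?_
                rw [Finset.mul_sum]
                refine Finset.sum_congr rfl fun l _ => ?_
                rw [← mul_assoc, ← hvadd hω1,
                  show (-j') * k + l * k = k * (l - j') by ring]
            _ = ∑ l : ZMod p, (∑ k : ZMod p, ω ^ ((k * (l - j')).val)) * a 0 l x := by
                rw [Finset.sum_comm]
                exact Finset.sum_congr rfl fun l _ => (Finset.sum_mul _ _ _).symm
            _ = ∑ l : ZMod p, (if l = j' then (p : ℂ) * a 0 l x else 0) := by
                refine Finset.sum_congr rfl fun l _ => ?_
                rw [horth hprim]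
                rcases eq_or_ne l j' with rfl | hne
                · simp
                · simp [sub_ne_zero.mpr hne, hne]
            _ = (p : ℂ) * a 0 j' x := by
                rw [Finset.sum_ite_eq' Finset.univ j']
                simp
        rw [hc2] at hc
        exact (mul_eq_zero.mp hc).resolve_left hpC
      rw [hshift a ha x hx i j]
      exact hzero _
    · intro h0 k x
      rw [hπ]
      exact Finset.sum_eq_zero fun j _ => by rw [h0 0 j x.1 x.2, mul_zero]
end

section
/- Let x₀ ∈ M with θ(x₀) ≠ x₀. Then the evaluation map a ↦ (a_{i,j}(x₀))_{i,j∈ℤ/pℤ} maps D(M₀,θ) onto all of M_p(ℂ); that is, for every matrix A ∈ M_p(ℂ) there exists a ∈ D(M,θ) whose entries all vanish on M_θ and such that a_{i,j}(x₀) = A_{i,j} for all i,j. -/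
open Matrix

/-- if `θ x₀ ≠ x₀`, evaluation at `x₀` maps `D(M₀,θ)` onto `M_p(ℂ)`:
for every `A ∈ M_p(ℂ)` there is `a ∈ D(M,θ)` vanishing (entrywise) on `M_θ`
with `a_{i,j}(x₀) = A_{i,j}`. -/
theorem stmt_5 {M : Type*} [TopologicalSpace M] [CompactSpace M] [T2Space M]
    (p : ℕ) (hp : p.Prime) [NeZero p] (θ : M ≃ₜ M) (hθ : ∀ x, (⇑θ)^[p] x = x)
    (x₀ : M) (hx₀ : θ x₀ ≠ x₀) (A : Matrix (ZMod p) (ZMod p) ℂ) :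
    ∃ a : Matrix (ZMod p) (ZMod p) C(M, ℂ), DPred p θ a ∧
      (∀ i j : ZMod p, ∀ x : M, θ x = x → a i j x = 0) ∧
      (∀ i j : ZMod p, a i j x₀ = A i j) := by
  classical
  haveI : Fact p.Prime := ⟨hp⟩
  -- iterates depend only on exponent mod p
  have hfix : ∀ (m : ℕ) (x : M), (⇑θ)^[p * m] x = x := by
    intro m x
    rw [Function.iterate_mul]
    exact Function.iterate_fixed (hθ x) m
  have hmod : ∀ (n : ℕ) (x : M), (⇑θ)^[n] x = (⇑θ)^[n % p] x := by
    intro n x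
    conv_lhs => rw [← Nat.mod_add_div n p, Function.iterate_add_apply, hfix]
  -- the orbit of x₀ is free
  have horb : ∀ k : ZMod p, k ≠ 0 → (⇑θ)^[k.val] x₀ ≠ x₀ := by
    intro k hk h
    apply hx₀
    set m : ℕ := (k⁻¹ : ZMod p).val with hm
    have h2 : (⇑θ)^[k.val * m] x₀ = x₀ := by
      rw [Function.iterate_mul]
      exact Function.iterate_fixed h m
    have hval : (k.val * m) % p = 1 := by
      have : ((k.val * m : ℕ) : ZMod p) = 1 := by
        push_cast [hm, ZMod.natCast_val, ZMod.cast_id]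
        exact mul_inv_cancel₀ hk
      rw [← ZMod.val_natCast, this, ZMod.val_one]
    have := h2
    rw [hmod, hval] at this
    simpa using this
  -- Urysohn function
  have hMθ : IsClosed {x : M | θ x = x} := isClosed_eq θ.continuous continuous_id
  have hKfin : (Set.range fun k : {k : ZMod p // k ≠ 0} => (⇑θ)^[(k : ZMod p).val] x₀).Finite :=
    Set.finite_range _
  set K : Set M := {x : M | θ x = x} ∪
    Set.range (fun k : {k : ZMod p // k ≠ 0} => (⇑θ)^[(k : ZMod p).val] x₀) with hK
  have hKclosed : IsClosed K := hMθ.union hKfin.isClosed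
  have hx₀K : x₀ ∉ K := by
    rintro (h | ⟨k, hk⟩)
    · exact hx₀ h
    · exact horb k k.2 hk
  obtain ⟨f, hf0, hf1, -⟩ := exists_continuous_zero_one_of_isClosed hKclosed
    (isClosed_singleton (x := x₀)) (Set.disjoint_singleton_right.mpr hx₀K)
  -- construct the matrix
  have hcont : ∀ i j : ZMod p, Continuous fun x : M =>
      ∑ k : ZMod p, A (i - k) (j - k) * (f ((⇑θ)^[k.val] x) : ℂ) := by
    intro i j
    apply continuous_finset_sum
    intro k _
    exact continuous_const.mul (Complex.continuous_ofReal.comp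
      (f.continuous.comp (θ.continuous.iterate k.val)))
  refine ⟨fun i j => ⟨fun x => ∑ k : ZMod p, A (i - k) (j - k) * (f ((⇑θ)^[k.val] x) : ℂ),
    hcont i j⟩, ?_, ?_, ?_⟩
  · intro i j x
    simp only [ContinuousMap.coe_mk]
    refine Fintype.sum_equiv (Equiv.subRight (1 : ZMod p)) _ _ ?_
    intro k
    have h2 : (⇑θ)^[(k - 1).val] (θ x) = (⇑θ)^[k.val] x := by
      rw [← Function.iterate_succ_apply, hmod ((k - 1).val + 1)]
      congr 1
      conv_rhs => rw [show k = k - 1 + 1 by ring]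
      rw [ZMod.val_add, ZMod.val_one]
    have h3 : i - (k - 1) = i + 1 - k := by ring
    have h4 : j - (k - 1) = j + 1 - k := by ring
    simp only [Equiv.subRight_apply, h2, h3, h4]
  · intro i j x hx
    simp only [ContinuousMap.coe_mk]
    have : ∀ k : ZMod p, (⇑θ)^[k.val] x = x := fun k => Function.iterate_fixed hx _
    refine Finset.sum_eq_zero fun k _ => ?_
    rw [this k, hf0 (Set.mem_union_left _ hx)]
    simp
  · intro i j
    simp only [ContinuousMap.coe_mk]
    rw [Finset.sum_eq_single (0 : ZMod p)]
    · rw [ZMod.val_zero]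
      simp [hf1 (Set.mem_singleton x₀)]
    · intro k _ hk
      rw [hf0 (Set.mem_union_right _ ⟨⟨k, hk⟩, rfl⟩)]
      simp
    · simp
end

section
/- Let x₀, x₁ ∈ M satisfy θ(x₀) ≠ x₀, θ(x₁) ≠ x₁, and x₁ ∉ {θ^j(x₀) : 0 ≤ j ≤ p−1}. Then there exists a ∈ D(M,θ) whose entries all vanish on M_θ, such that a_{i,j}(x₀) = 0 for all i,j while a_{i,j}(x₁) ≠ 0 for some i,j. -/
open Matrix

/-- if `x₀, x₁` are non-fixed points of `θ` with `x₁` not in the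
`θ`-orbit of `x₀`, then there is `a ∈ D(M,θ)` vanishing entrywise on `M_θ`
with `a(x₀) = 0` but `a(x₁) ≠ 0`. -/
theorem stmt_7 {M : Type*} [TopologicalSpace M] [CompactSpace M] [T2Space M]
    (p : ℕ) (hp : p.Prime) [NeZero p] (θ : M ≃ₜ M) (hθ : ∀ x, (⇑θ)^[p] x = x)
    (x₀ x₁ : M) (hx₀ : θ x₀ ≠ x₀) (hx₁ : θ x₁ ≠ x₁)
    (horb : ∀ j : ℕ, j ≤ p - 1 → (⇑θ)^[j] x₀ ≠ x₁) :
    ∃ a : Matrix (ZMod p) (ZMod p) C(M, ℂ), DPred p θ a ∧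
      (∀ i j : ZMod p, ∀ x : M, θ x = x → a i j x = 0) ∧
      (∀ i j : ZMod p, a i j x₀ = 0) ∧
      (∃ i j : ZMod p, a i j x₁ ≠ 0) := by
  -- periodicity lemmas
  have hmul : ∀ (n : ℕ) (x : M), (⇑θ)^[p * n] x = x := by
    intro n
    induction n with
    | zero => simp
    | succ n ih =>
      intro x
      rw [Nat.mul_succ, Function.iterate_add_apply, hθ, ih]
  have hmod : ∀ (n : ℕ) (x : M), (⇑θ)^[n] x = (⇑θ)^[n % p] x := by
    intro n x
    conv_lhs => rw [← Nat.mod_add_div n p, Function.iterate_add_apply, hmul]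
  -- the closed set to vanish on
  set K : Set M := {x | θ x = x} ∪ (Set.range fun k : Fin p => (⇑θ)^[(k : ℕ)] x₀)
  have hKclosed : IsClosed K := by
    apply IsClosed.union
    · exact isClosed_eq θ.continuous continuous_id
    · exact (Set.finite_range _).isClosed
  have hx₁K : x₁ ∉ K := by
    rintro (h | ⟨k, hk⟩)
    · exact hx₁ h
    · exact horb k (Nat.le_sub_one_of_lt k.2) hk
  obtain ⟨f, hf0, hf1, -⟩ := exists_continuous_zero_one_of_isClosed hKclosed
    (isClosed_singleton (x := x₁)) (Set.disjoint_singleton_right.mpr hx₁K)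
  have hcont : ∀ n : ℕ, Continuous fun x : M => ((f ((⇑θ)^[n] x) : ℝ) : ℂ) :=
    fun n => Complex.continuous_ofReal.comp (f.continuous.comp (θ.continuous.iterate n))
  refine ⟨fun i j => if i = j then ⟨_, hcont i.val⟩ else 0, ?_, ?_, ?_, ?_⟩
  · intro i j x
    by_cases h : i = j
    · subst h
      simp only [if_pos rfl]
      show ((f ((⇑θ)^[(i + 1).val] x) : ℝ) : ℂ) = ((f ((⇑θ)^[i.val] (θ x)) : ℝ) : ℂ)
      rw [← Function.iterate_succ_apply]
      have hv : (i + 1).val = (i.val + 1) % p := by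
        have : Fact (1 < p) := ⟨hp.one_lt⟩
        rw [ZMod.val_add, ZMod.val_one]
      rw [hv, ← hmod]
    · have h' : ¬ (i + 1 = j + 1) := fun hh => h (by simpa using hh)
      simp [h, h']
  · intro i j x hx
    by_cases h : i = j
    · subst h
      have hfix : (⇑θ)^[i.val] x = x := Function.iterate_fixed hx i.val
      have hfx : f x = 0 := hf0 (Or.inl hx)
      simp only [if_pos rfl]
      show ((f ((⇑θ)^[i.val] x) : ℝ) : ℂ) = 0
      rw [hfix, hfx, Complex.ofReal_zero]
    · simp [h]
  · intro i j
    by_cases h : i = j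
    · subst h
      have hfx : f ((⇑θ)^[i.val] x₀) = 0 := hf0 (Or.inr ⟨⟨i.val, i.val_lt⟩, rfl⟩)
      simp only [if_pos rfl]
      show ((f ((⇑θ)^[i.val] x₀) : ℝ) : ℂ) = 0
      rw [hfx, Complex.ofReal_zero]
    · simp [h]
  · refine ⟨0, 0, ?_⟩
    simp only [if_pos rfl]
    show ((f ((⇑θ)^[(0 : ZMod p).val] x₁) : ℝ) : ℂ) ≠ 0
    rw [ZMod.val_zero, Function.iterate_zero_apply, hf1 rfl]
    norm_num
end

section
/- For every x₀ ∈ M_θ and every k ∈ ℤ/pℤ, the functional σ_{x₀,k} : D(M,θ) → ℂ defined by σ_{x₀,k}(a) = Σ_{j∈ℤ/pℤ} ω^{jk} a_{0,j}(x₀) is a unital star-algebra homomorphism (a character) of D(M,θ). -/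
open Matrix

/-- for `x₀ ∈ M_θ` and `k ∈ ℤ/pℤ`, the functional
`σ_{x₀,k}(a) = ∑_j ω^{jk} a_{0,j}(x₀)` is a unital star-algebra homomorphism
(character) on `D(M,θ)`. -/
theorem stmt_8 {M : Type*} [TopologicalSpace M] [CompactSpace M] [T2Space M]
    (p : ℕ) (hp : p.Prime) [NeZero p] (θ : M ≃ₜ M) (hθ : ∀ x, (⇑θ)^[p] x = x)
    (ω : ℂ) (hω : ω = Complex.exp (2 * Real.pi * Complex.I / p))
    (x₀ : M) (hx₀ : θ x₀ = x₀) (k : ZMod p)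
    (σ : Matrix (ZMod p) (ZMod p) C(M, ℂ) → ℂ)
    (hσ : ∀ a, σ a = ∑ j : ZMod p, ω ^ (j * k).val * a 0 j x₀) :
    (∀ a b, DPred p θ a → DPred p θ b → σ (a + b) = σ a + σ b) ∧
    (∀ a b, DPred p θ a → DPred p θ b → σ (a * b) = σ a * σ b) ∧
    (∀ (c : ℂ) a, DPred p θ a → σ (c • a) = c * σ a) ∧
    (∀ a, DPred p θ a → σ (star a) = starRingEnd ℂ (σ a)) ∧
    σ 1 = 1 := by
  have hpc : (p : ℂ) ≠ 0 := by exact_mod_cast (NeZero.ne p)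
  have hωp : ω ^ p = 1 := by
    have h : (p : ℂ) * (2 * Real.pi * Complex.I / p) = 2 * Real.pi * Complex.I := by
      field_simp
    rw [hω, ← Complex.exp_nat_mul, h, Complex.exp_two_pi_mul_I]
  have hω0 : ω ≠ 0 := by rw [hω]; exact Complex.exp_ne_zero _
  have hmod : ∀ n : ℕ, ω ^ n = ω ^ (n % p) := by
    intro n
    conv_lhs => rw [← Nat.mod_add_div n p]
    rw [pow_add, pow_mul, hωp, one_pow, mul_one]
  -- the character values
  set χ : ZMod p → ℂ := fun j => ω ^ (j * k).val with hχ
  have hχmul : ∀ i j : ZMod p, χ (i + j) = χ i * χ j := by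
    intro i j
    have h1 : ((i + j) * k) = i * k + j * k := add_mul i j k
    calc χ (i + j) = ω ^ ((i * k + j * k).val) := by rw [hχ]; simp [h1]
      _ = ω ^ (((i * k).val + (j * k).val) % p) := by rw [ZMod.val_add]
      _ = ω ^ ((i * k).val + (j * k).val) := (hmod _).symm
      _ = χ i * χ j := by rw [pow_add]
  have hχ0 : χ 0 = 1 := by simp [hχ]
  have hχconj : ∀ j : ZMod p, (starRingEnd ℂ) (χ j) = χ (-j) := by
    intro j
    have h1 : χ (-j) * χ j = 1 := by
      rw [← hχmul, neg_add_cancel, hχ0]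
    have hconjω : (starRingEnd ℂ) ω = ω⁻¹ := by
      have h2 : (starRingEnd ℂ) (2 * Real.pi * Complex.I / p)
          = -(2 * Real.pi * Complex.I / p) := by
        simp [map_div₀, Complex.conj_I, map_ofNat]
        ring
      rw [hω, ← Complex.exp_conj, h2, Complex.exp_neg]
    rw [hχ]
    simp only [map_pow, hconjω, inv_pow]
    exact (eq_inv_of_mul_eq_one_left h1).symm
  -- equivariance at the fixed point
  have hEq : ∀ a : Matrix (ZMod p) (ZMod p) C(M, ℂ), DPred p θ a →
      ∀ i j : ZMod p, a i j x₀ = a 0 (j - i) x₀ := by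
    intro a ha i j
    have hshift : ∀ n : ℕ, ∀ i j : ZMod p, a (i + n) (j + n) x₀ = a i j x₀ := by
      intro n
      induction n with
      | zero => intro i j; simp
      | succ n ih =>
          intro i j
          have h1 := ha (i + n) (j + n) x₀
          rw [hx₀] at h1
          have h2 : ((n : ZMod p) + 1) = ((n + 1 : ℕ) : ZMod p) := by push_cast; ring
          calc a (i + (n + 1 : ℕ)) (j + (n + 1 : ℕ)) x₀
              = a (i + n + 1) (j + n + 1) x₀ := by rw [← h2]; ring_nf
            _ = a (i + n) (j + n) x₀ := h1
            _ = a i j x₀ := ih i j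
    have h3 := hshift i.val 0 (j - i)
    have h4 : ((i.val : ℕ) : ZMod p) = i := by
      simp [ZMod.natCast_val, ZMod.cast_id]
    rw [h4, zero_add, sub_add_cancel] at h3
    exact h3
  refine ⟨?_, ?_, ?_, ?_, ?_⟩
  · intro a b _ _
    simp [hσ, Matrix.add_apply, mul_add, Finset.sum_add_distrib]
  · intro a b ha hb
    have key : ∀ j : ZMod p, ((a * b) 0 j) x₀ = ∑ l : ZMod p, a 0 l x₀ * b l j x₀ := by
      intro j
      rw [Matrix.mul_apply]
      simp
    rw [hσ, hσ, hσ, Finset.sum_mul_sum]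
    calc ∑ j : ZMod p, χ j * ((a * b) 0 j) x₀
        = ∑ j : ZMod p, ∑ l : ZMod p, χ j * (a 0 l x₀ * b 0 (j - l) x₀) := by
          refine Finset.sum_congr rfl fun j _ => ?_
          rw [key j, Finset.mul_sum]
          refine Finset.sum_congr rfl fun l _ => ?_
          rw [hEq b hb l j]
      _ = ∑ l : ZMod p, ∑ j : ZMod p, χ j * (a 0 l x₀ * b 0 (j - l) x₀) :=
          Finset.sum_comm
      _ = ∑ l : ZMod p, ∑ m : ZMod p,
            (χ l * a 0 l x₀) * (χ m * b 0 m x₀) := by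
          refine Finset.sum_congr rfl fun l _ => ?_
          refine Fintype.sum_equiv (Equiv.subRight l) _ _ fun m => ?_
          simp only [Equiv.subRight_apply]
          have hm : χ m = χ l * χ (m - l) := by rw [← hχmul, add_sub_cancel]
          rw [hm]; ring
  · intro c a _
    rw [hσ, hσ, Finset.mul_sum]
    refine Finset.sum_congr rfl fun j _ => ?_
    simp only [Matrix.smul_apply, ContinuousMap.smul_apply, smul_eq_mul]
    ring
  · intro a ha
    have hχapp : ∀ j : ZMod p, ω ^ (j * k).val = χ j := fun j => rfl
    rw [hσ, hσ, _root_.map_sum]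
    simp only [hχapp]
    refine Fintype.sum_equiv (Equiv.neg (ZMod p)) _ _ fun j => ?_
    simp only [Equiv.neg_apply, _root_.map_mul, hχconj, neg_neg]
    congr 1
    have h1 : (star a) 0 j = star (a j 0) := Matrix.star_apply _ _ _
    rw [h1]
    have h2 : a j 0 x₀ = a 0 (-j) x₀ := by
      rw [hEq a ha j 0]; simp
    simp only [ContinuousMap.star_apply, h2]
    rfl
  · rw [hσ]
    have key : ∀ j : ZMod p, ((1 : Matrix (ZMod p) (ZMod p) C(M, ℂ)) 0 j) x₀
        = if 0 = j then 1 else 0 := by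
      intro j
      rw [Matrix.one_apply]
      split <;> simp
    simp only [key, mul_ite, mul_one, mul_zero]
    rw [Finset.sum_ite_eq]
    simp
end

section
/- Assume M_θ ≠ ∅. Every continuous unital algebra homomorphism φ : D(M,θ) → ℂ is of the form σ_{x₀,k} for some x₀ ∈ M_θ and some k ∈ ℤ/pℤ; that is, there exist x₀ ∈ M_θ and k ∈ ℤ/pℤ such that φ(a) = Σ_{j∈ℤ/pℤ} ω^{jk} a_{0,j}(x₀) for all a ∈ D(M,θ). -/
open Matrix

namespace Stmt9Aux

set_option linter.unusedSectionVars false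

variable {M : Type*} [TopologicalSpace M]

/-- The `n`-th iterate of `θ` as a continuous map. -/
def thIter (θ : M ≃ₜ M) (n : ℕ) : C(M, M) := ⟨(⇑θ)^[n], θ.continuous.iterate n⟩

@[simp] lemma thIter_apply (θ : M ≃ₜ M) (n : ℕ) (x : M) : thIter θ n x = (⇑θ)^[n] x := rfl

variable (p : ℕ) [NeZero p] (θ : M ≃ₜ M)

lemma iter_pmul (hθ : ∀ x, (⇑θ)^[p] x = x) (m : ℕ) (x : M) : (⇑θ)^[p * m] x = x := by
  induction m with
  | zero => simp
  | succ m ih =>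
    rw [Nat.mul_succ, Function.iterate_add_apply, hθ, ih]

lemma iter_mod (hθ : ∀ x, (⇑θ)^[p] x = x) (c : ℕ) (x : M) :
    (⇑θ)^[c] x = (⇑θ)^[c % p] x := by
  conv_lhs => rw [← Nat.mod_add_div c p]
  rw [Function.iterate_add_apply, iter_pmul p θ hθ]

lemma iter_congr (hθ : ∀ x, (⇑θ)^[p] x = x) {a b : ℕ}
    (h : (a : ZMod p) = (b : ZMod p)) (x : M) : (⇑θ)^[a] x = (⇑θ)^[b] x := by
  have hm : a % p = b % p := (ZMod.natCast_eq_natCast_iff a b p).mp h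
  rw [iter_mod p θ hθ a x, hm, ← iter_mod p θ hθ b x]

lemma valCast (a : ZMod p) : ((a.val : ℕ) : ZMod p) = a := ZMod.natCast_rightInverse a

/-- The diagonal embedding of `C(M,ℂ)` into `D(M,θ)`. -/
noncomputable def iotaD (f : C(M, ℂ)) : Matrix (ZMod p) (ZMod p) C(M, ℂ) :=
  Matrix.of fun i j => if i = j then f.comp (thIter θ i.val) else 0

/-- The shift unitary. -/
noncomputable def shiftU : Matrix (ZMod p) (ZMod p) C(M, ℂ) :=
  Matrix.of fun i j => if j = i + 1 then 1 else 0

lemma DPred_iota (hθ : ∀ x, (⇑θ)^[p] x = x) (f : C(M, ℂ)) :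
    DPred p θ (iotaD p θ f) := by
  intro i j x
  simp only [iotaD, Matrix.of_apply]
  by_cases h : i = j
  · subst h
    rw [if_pos rfl, if_pos rfl]
    simp only [ContinuousMap.comp_apply, thIter_apply]
    have hcast : (((i + 1).val : ℕ) : ZMod p) = ((i.val + 1 : ℕ) : ZMod p) := by
      push_cast
      rw [valCast, valCast]
    rw [iter_congr p θ hθ hcast, Function.iterate_succ_apply]
  · rw [if_neg h, if_neg (fun hc => h (by simpa using add_right_cancel hc))]
    simp

lemma DPred_shiftU : DPred p θ (shiftU p) := by
  intro i j x
  simp only [shiftU, Matrix.of_apply]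
  by_cases h : j = i + 1
  · subst h; simp
  · rw [if_neg h, if_neg (fun hc : j + 1 = (i + 1) + 1 => h (add_right_cancel hc))]
    simp

lemma DPred_one : DPred p θ (1 : Matrix (ZMod p) (ZMod p) C(M, ℂ)) := by
  intro i j x
  by_cases h : i = j
  · subst h; simp [Matrix.one_apply]
  · rw [Matrix.one_apply_ne h, Matrix.one_apply_ne (fun hc => h (add_right_cancel hc))]
    simp

lemma DPred_zero : DPred p θ (0 : Matrix (ZMod p) (ZMod p) C(M, ℂ)) := by
  intro i j x; simp

lemma DPred_add {a b : Matrix (ZMod p) (ZMod p) C(M, ℂ)} (ha : DPred p θ a)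
    (hb : DPred p θ b) : DPred p θ (a + b) := by
  intro i j x
  simp only [Matrix.add_apply, ContinuousMap.add_apply, ha i j x, hb i j x]

lemma DPred_mul {a b : Matrix (ZMod p) (ZMod p) C(M, ℂ)} (ha : DPred p θ a)
    (hb : DPred p θ b) : DPred p θ (a * b) := by
  intro i j x
  simp only [Matrix.mul_apply, ContinuousMap.coe_sum, Finset.sum_apply,
    ContinuousMap.mul_apply]
  exact (Fintype.sum_equiv (Equiv.addRight (1 : ZMod p))
    (fun l => a i l (θ x) * b l j (θ x))
    (fun l => a (i + 1) l x * b l (j + 1) x)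
    (fun l => by
      show a i l (θ x) * b l j (θ x) = a (i + 1) (l + 1) x * b (l + 1) (j + 1) x
      rw [← ha i l x, ← hb l j x])).symm

lemma DPred_sum {ι : Type*} (s : Finset ι) (F : ι → Matrix (ZMod p) (ZMod p) C(M, ℂ))
    (h : ∀ n ∈ s, DPred p θ (F n)) : DPred p θ (∑ n ∈ s, F n) := by
  classical
  induction s using Finset.induction_on with
  | empty => simpa using DPred_zero p θ
  | @insert a s hns ih =>
    rw [Finset.sum_insert hns]
    exact DPred_add p θ (h _ (Finset.mem_insert_self _ _))
      (ih fun n hn => h n (Finset.mem_insert_of_mem hn))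

lemma shiftU_pow (n : ℕ) :
    (shiftU p : Matrix (ZMod p) (ZMod p) C(M, ℂ)) ^ n =
      Matrix.of fun i j => if j = i + (n : ZMod p) then 1 else 0 := by
  induction n with
  | zero =>
    apply Matrix.ext; intro i j
    simp [Matrix.one_apply, eq_comm]
  | succ n ih =>
    apply Matrix.ext; intro i j
    rw [pow_succ, ih, Matrix.mul_apply]
    simp only [Matrix.of_apply, shiftU, ite_mul, one_mul, zero_mul]
    rw [Finset.sum_ite_eq' Finset.univ (i + (n : ZMod p))
      (fun l => if j = l + 1 then (1 : C(M, ℂ)) else 0)]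
    simp only [Finset.mem_univ, if_pos]
    have : i + ((n : ℕ) + 1 : ℕ) = i + (n : ZMod p) + 1 := by push_cast; ring
    rw [this]

lemma shiftU_pow_p :
    (shiftU p : Matrix (ZMod p) (ZMod p) C(M, ℂ)) ^ p = 1 := by
  rw [shiftU_pow]
  apply Matrix.ext; intro i j
  simp [Matrix.one_apply, eq_comm, ZMod.natCast_self]

lemma iota_mul_shiftU_pow (f : C(M, ℂ)) (n : ℕ) :
    iotaD p θ f * (shiftU p) ^ n =
      Matrix.of fun i j => if j = i + (n : ZMod p) then f.comp (thIter θ i.val) else 0 := by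
  apply Matrix.ext; intro i j
  rw [shiftU_pow, Matrix.mul_apply]
  simp only [Matrix.of_apply, iotaD, ite_mul, zero_mul]
  rw [Finset.sum_ite_eq Finset.univ i
    (fun l => f.comp (thIter θ i.val) * if j = l + (n : ZMod p) then 1 else 0)]
  simp only [Finset.mem_univ, if_pos]
  by_cases h : j = i + (n : ZMod p) <;> simp [h]

lemma shift_formula {a : Matrix (ZMod p) (ZMod p) C(M, ℂ)} (ha : DPred p θ a)
    (m : ℕ) (i j : ZMod p) (x : M) :
    a i j x = a (i - (m : ZMod p)) (j - (m : ZMod p)) ((⇑θ)^[m] x) := by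
  induction m with
  | zero => simp
  | succ m ih =>
    rw [ih]
    have h1 := ha (i - (m : ZMod p) - 1) (j - (m : ZMod p) - 1) ((⇑θ)^[m] x)
    simp only [sub_add_cancel] at h1
    have h2' : θ ((⇑θ)^[m] x) = (⇑θ)^[m + 1] x := (Function.iterate_succ_apply' (⇑θ) m x).symm
    rw [h1, h2']
    have h2 : i - ((m : ℕ) + 1 : ℕ) = i - (m : ZMod p) - 1 := by push_cast; ring
    have h3 : j - ((m : ℕ) + 1 : ℕ) = j - (m : ZMod p) - 1 := by push_cast; ring
    rw [h2, h3]

lemma decomposition {a : Matrix (ZMod p) (ZMod p) C(M, ℂ)} (ha : DPred p θ a) :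
    a = ∑ n : ZMod p, iotaD p θ (a 0 n) * (shiftU p) ^ n.val := by
  apply Matrix.ext; intro i j
  rw [Matrix.sum_apply]
  have key : ∀ n : ZMod p,
      ((iotaD p θ (a 0 n) * (shiftU p) ^ n.val : Matrix (ZMod p) (ZMod p) C(M, ℂ))) i j =
        if n = j - i then (a 0 n).comp (thIter θ i.val) else 0 := by
    intro n
    rw [iota_mul_shiftU_pow]
    simp only [Matrix.of_apply, valCast]
    by_cases h : j = i + n
    · rw [if_pos h, if_pos (by rw [h]; ring)]
    · rw [if_neg h, if_neg (fun hc => h (by rw [hc]; ring))]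
  rw [Finset.sum_congr rfl (fun n _ => key n),
    Finset.sum_ite_eq' Finset.univ (j - i) (fun n => (a 0 n).comp (thIter θ i.val))]
  simp only [Finset.mem_univ, if_pos]
  ext x
  simp only [ContinuousMap.comp_apply, thIter_apply]
  have h1 := shift_formula p θ ha i.val i j x
  rw [valCast, sub_self] at h1
  exact h1

end Stmt9Aux

open Stmt9Aux in
/-- assume `M_θ ≠ ∅`. Every continuous unital algebra homomorphism
`φ : D(M,θ) → ℂ` equals `σ_{x₀,k} : a ↦ ∑_j ω^{jk} a_{0,j}(x₀)` for some fixed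
point `x₀` of `θ` and some `k ∈ ℤ/pℤ`. -/
theorem stmt_9 {M : Type*} [TopologicalSpace M] [CompactSpace M] [T2Space M]
    (p : ℕ) (hp : p.Prime) [NeZero p] (θ : M ≃ₜ M) (hθ : ∀ x, (⇑θ)^[p] x = x)
    (hMθ : ∃ x : M, θ x = x)
    (ω : ℂ) (hω : ω = Complex.exp (2 * Real.pi * Complex.I / p))
    (φ : Matrix (ZMod p) (ZMod p) C(M, ℂ) → ℂ)
    (hcont : ContinuousOn φ {a | DPred p θ a})
    (hadd : ∀ a b, DPred p θ a → DPred p θ b → φ (a + b) = φ a + φ b)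
    (hmul : ∀ a b, DPred p θ a → DPred p θ b → φ (a * b) = φ a * φ b)
    (hsmul : ∀ (c : ℂ) a, DPred p θ a → φ (c • a) = c * φ a)
    (hone : φ 1 = 1) :
    ∃ (x₀ : M) (k : ZMod p), θ x₀ = x₀ ∧
      ∀ a, DPred p θ a → φ a = ∑ j : ZMod p, ω ^ (j * k).val * a 0 j x₀ := by
  classical
  -- `iotaD` is an algebra homomorphism
  have iota_add : ∀ f g : C(M, ℂ), iotaD p θ (f + g) = iotaD p θ f + iotaD p θ g := by
    intro f g
    apply Matrix.ext; intro i j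
    simp only [iotaD, Matrix.of_apply, Matrix.add_apply]
    by_cases h : i = j
    · subst h; ext x; simp
    · simp [h]
  have iota_smul : ∀ (c : ℂ) (f : C(M, ℂ)), iotaD p θ (c • f) = c • iotaD p θ f := by
    intro c f
    apply Matrix.ext; intro i j
    simp only [iotaD, Matrix.of_apply, Matrix.smul_apply]
    by_cases h : i = j
    · subst h; ext x; simp
    · simp [h]
  have iota_mul : ∀ f g : C(M, ℂ), iotaD p θ (f * g) = iotaD p θ f * iotaD p θ g := by
    intro f g
    apply Matrix.ext; intro i j
    rw [Matrix.mul_apply]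
    simp only [iotaD, Matrix.of_apply, ite_mul, zero_mul]
    rw [Finset.sum_ite_eq Finset.univ i
      (fun l => f.comp (thIter θ i.val) * if l = j then g.comp (thIter θ l.val) else 0)]
    simp only [Finset.mem_univ, if_pos]
    by_cases h : i = j
    · subst h; rw [if_pos rfl, if_pos rfl]; ext x; simp
    · simp [h]
  have iota_one : iotaD p θ (1 : C(M, ℂ)) = 1 := by
    apply Matrix.ext; intro i j
    simp only [iotaD, Matrix.of_apply, Matrix.one_apply]
    by_cases h : i = j
    · subst h; rw [if_pos rfl, if_pos rfl]; ext x; simp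
    · simp [h]
  -- continuity of iotaD
  have iota_cont : Continuous fun f : C(M, ℂ) => iotaD p θ f := by
    apply continuous_matrix
    intro i j
    by_cases h : i = j
    · subst h
      simpa only [iotaD, Matrix.of_apply, if_pos rfl, ↓reduceIte] using
        ContinuousMap.continuous_precomp (thIter θ i.val) (Z := ℂ)
    · simpa only [iotaD, Matrix.of_apply, if_neg h] using
        (continuous_const : Continuous fun _ : C(M, ℂ) => (0 : C(M, ℂ)))
  have hzero : φ 0 = 0 := by
    have h := hadd 0 0 (DPred_zero p θ) (DPred_zero p θ)
    rw [add_zero] at h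
    exact left_eq_add.mp h
  -- the induced character on C(M, ℂ)
  let ψ : C(M, ℂ) →L[ℂ] ℂ :=
    { toFun := fun f => φ (iotaD p θ f)
      map_add' := fun f g => by
        show φ (iotaD p θ (f + g)) = φ (iotaD p θ f) + φ (iotaD p θ g)
        rw [iota_add]
        exact hadd _ _ (DPred_iota p θ hθ f) (DPred_iota p θ hθ g)
      map_smul' := fun c f => by
        show φ (iotaD p θ (c • f)) = c * φ (iotaD p θ f)
        rw [iota_smul]
        simpa using hsmul c _ (DPred_iota p θ hθ f)
      cont := hcont.comp_continuous iota_cont fun f => DPred_iota p θ hθ f }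
  have hψone : ψ 1 = 1 := by
    show φ (iotaD p θ 1) = 1
    rw [iota_one]; exact hone
  let ψchar : WeakDual.characterSpace ℂ C(M, ℂ) :=
    ⟨ψ, by
      refine ⟨fun h0 => ?_, fun f g => ?_⟩
      · have h1 : ψ 1 = 0 := by rw [h0]; rfl
        rw [hψone] at h1
        exact one_ne_zero h1
      · show φ (iotaD p θ (f * g)) = φ (iotaD p θ f) * φ (iotaD p θ g)
        rw [iota_mul]
        exact hmul _ _ (DPred_iota p θ hθ f) (DPred_iota p θ hθ g)⟩
  obtain ⟨x₀, hx₀⟩ := (WeakDual.CharacterSpace.homeoEval M ℂ).surjective ψchar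
  have heval : ∀ f : C(M, ℂ), φ (iotaD p θ f) = f x₀ := by
    intro f
    have h := congrArg (fun T : WeakDual.characterSpace ℂ C(M, ℂ) => T f) hx₀
    exact h.symm
  -- the shift and its powers
  have hDu : DPred p θ (shiftU p (M := M)) := DPred_shiftU p θ
  have hDupow : ∀ n : ℕ, DPred p θ ((shiftU p : Matrix (ZMod p) (ZMod p) C(M, ℂ)) ^ n) := by
    intro n
    induction n with
    | zero => simpa using DPred_one p θ
    | succ n ih => rw [pow_succ]; exact DPred_mul p θ ih hDu
  have hupow : ∀ n : ℕ,
      φ ((shiftU p : Matrix (ZMod p) (ZMod p) C(M, ℂ)) ^ n) = (φ (shiftU p)) ^ n := by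
    intro n
    induction n with
    | zero => simpa using hone
    | succ n ih => rw [pow_succ, hmul _ _ (hDupow n) hDu, ih, pow_succ]
  have hroot : (φ (shiftU p (M := M))) ^ p = 1 := by
    rw [← hupow, shiftU_pow_p, hone]
  have hprim : IsPrimitiveRoot ω p := by
    rw [hω]; exact Complex.isPrimitiveRoot_exp p (NeZero.ne p)
  obtain ⟨i, hip, hωi⟩ := hprim.eq_pow_of_pow_eq_one hroot
  have hωp : ω ^ p = 1 := hprim.pow_eq_one
  have hω0 : ω ≠ 0 := by
    intro h
    rw [h, zero_pow (NeZero.ne p)] at hωp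
    exact zero_ne_one hωp
  have hu0 : φ (shiftU p (M := M)) ≠ 0 := by rw [← hωi]; exact pow_ne_zero _ hω0
  -- the commutation relation and the fixed point
  have hrel : ∀ f : C(M, ℂ),
      iotaD p θ f * shiftU p = shiftU p * iotaD p θ (f.comp (θ.symm : C(M, M))) := by
    intro f
    have hL := iota_mul_shiftU_pow p θ f 1
    rw [pow_one] at hL
    rw [hL]
    apply Matrix.ext; intro i j
    rw [Matrix.mul_apply]
    simp only [Matrix.of_apply, shiftU, iotaD, ite_mul, one_mul, zero_mul]
    rw [Finset.sum_ite_eq' Finset.univ (i + 1)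
      (fun l => if l = j then (f.comp (θ.symm : C(M, M))).comp (thIter θ l.val) else 0)]
    simp only [Finset.mem_univ, if_pos, Nat.cast_one]
    by_cases h : j = i + 1
    · rw [if_pos h, if_pos h.symm]
      ext x
      simp only [ContinuousMap.comp_apply, thIter_apply]
      have hcast : (((i + 1).val : ℕ) : ZMod p) = ((i.val + 1 : ℕ) : ZMod p) := by
        push_cast
        rw [valCast, valCast]
      rw [iter_congr p θ hθ hcast, Function.iterate_succ_apply']
      congr 1
      exact (θ.symm_apply_apply _).symm
    · rw [if_neg h, if_neg (fun hc => h hc.symm)]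
  have hfix : ∀ f : C(M, ℂ), f x₀ = f (θ.symm x₀) := by
    intro f
    have h3 : φ (iotaD p θ f) * φ (shiftU p) =
        φ (shiftU p) * φ (iotaD p θ (f.comp (θ.symm : C(M, M)))) := by
      rw [← hmul _ _ (DPred_iota p θ hθ f) hDu, hrel f,
        hmul _ _ hDu (DPred_iota p θ hθ _)]
    rw [heval, heval] at h3
    rw [mul_comm (φ (shiftU p (M := M)))] at h3
    have h4 := mul_right_cancel₀ hu0 h3
    simpa using h4
  have hfixpt : θ x₀ = x₀ := by
    have hxeq : x₀ = θ.symm x₀ := by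
      apply (WeakDual.CharacterSpace.homeoEval M ℂ).injective
      apply Subtype.ext
      apply ContinuousLinearMap.ext
      intro f
      exact hfix f
    conv_lhs => rw [hxeq]
    exact θ.apply_symm_apply x₀
  -- the value of φ on powers of the shift
  have hk : ((i : ZMod p)).val = i := ZMod.val_cast_of_lt hip
  have hpow_mod : ∀ m : ℕ, ω ^ m = ω ^ (m % p) := by
    intro m
    conv_lhs => rw [← Nat.mod_add_div m p, pow_add, pow_mul, hωp, one_pow, mul_one]
  refine ⟨x₀, (i : ZMod p), hfixpt, ?_⟩
  intro a ha
  have hφsum :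
      φ (∑ n : ZMod p, iotaD p θ (a 0 n) * (shiftU p) ^ n.val)
        = ∑ n : ZMod p, φ (iotaD p θ (a 0 n) * (shiftU p) ^ n.val) := by
    have : ∀ s : Finset (ZMod p),
        φ (∑ n ∈ s, iotaD p θ (a 0 n) * (shiftU p) ^ n.val)
          = ∑ n ∈ s, φ (iotaD p θ (a 0 n) * (shiftU p) ^ n.val) := by
      intro s
      induction s using Finset.induction_on with
      | empty => simpa using hzero
      | @insert c s hns ih =>
        rw [Finset.sum_insert hns, Finset.sum_insert hns,
          hadd _ _ (DPred_mul p θ (DPred_iota p θ hθ _) (hDupow _))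
            (DPred_sum p θ _ _ fun n _ => DPred_mul p θ (DPred_iota p θ hθ _) (hDupow _)),
          ih]
    exact this Finset.univ
  conv_lhs => rw [decomposition p θ ha]
  rw [hφsum]
  refine Finset.sum_congr rfl fun n _ => ?_
  rw [hmul _ _ (DPred_iota p θ hθ _) (hDupow _), heval, hupow, ← hωi, ← pow_mul, mul_comm]
  congr 1
  rw [hpow_mod (i * n.val), hpow_mod ((n * (i : ZMod p)).val)]
  congr 1
  rw [Nat.mod_eq_of_lt (ZMod.val_lt _), ZMod.val_mul, hk, Nat.mul_comm]
end

section
/- Regard each P_k = Ω_p* e_k Ω_p as a constant matrix in M_p(C(M,ℂ)). For every a ∈ D(M,θ) and every k ∈ ℤ/pℤ, there exists a continuous function g : M → ℂ with g ∘ θ = g such that P_k · a · P_k = g · P_k (pointwise scalar multiple); explicitly one may take g(x) = (Ω_p (a_{i,j}(x))_{i,j} Ω_p*)_{k,k}. In particular, the compression P_k D(M,θ) P_k is a commutative algebra. -/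
open Matrix

/-- regarding each `P_k = Ω_p* e_k Ω_p` as a constant matrix in
`M_p(C(M,ℂ))`, for every `a ∈ D(M,θ)` the compression `P_k a P_k` is a scalar
multiple `g · P_k` with `g` continuous and `θ`-invariant, explicitly
`g(x) = (Ω_p a(x) Ω_p*)_{k,k}`; in particular `P_k D(M,θ) P_k` is commutative. -/
theorem stmt_10 {M : Type*} [TopologicalSpace M] [CompactSpace M] [T2Space M]
    (p : ℕ) (hp : 2 ≤ p) [NeZero p] (θ : M ≃ₜ M) (hθ : ∀ x, (⇑θ)^[p] x = x)
    (ω : ℂ) (hω : ω = Complex.exp (2 * Real.pi * Complex.I / p))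
    (Ω : Matrix (ZMod p) (ZMod p) ℂ)
    (hΩ : ∀ j k : ZMod p, Ω j k = ω ^ (j.val * k.val) / (Real.sqrt p : ℂ))
    (P : ZMod p → Matrix (ZMod p) (ZMod p) ℂ)
    (hP : ∀ k : ZMod p, P k = Ωᴴ * Matrix.single k k 1 * Ω)
    (Pc : ZMod p → Matrix (ZMod p) (ZMod p) C(M, ℂ))
    (hPc : ∀ k i j : ZMod p, Pc k i j = ContinuousMap.const M (P k i j)) :
    ∀ a, DPred p θ a → ∀ k : ZMod p,
      (∃ g : C(M, ℂ), (∀ x, g (θ x) = g x) ∧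
        (∀ x, g x = (Ω * (Matrix.of fun i j : ZMod p => a i j x) * Ωᴴ) k k) ∧
        (∀ i j : ZMod p, ∀ x : M, (Pc k * a * Pc k) i j x = g x * P k i j)) ∧
      (∀ b, DPred p θ b →
        (Pc k * a * Pc k) * (Pc k * b * Pc k) = (Pc k * b * Pc k) * (Pc k * a * Pc k)) := by
  have hpC : (p : ℂ) ≠ 0 := Nat.cast_ne_zero.mpr (NeZero.ne p)
  have hω0 : ω ≠ 0 := by rw [hω]; exact Complex.exp_ne_zero _
  have hconj : (starRingEnd ℂ) ω = ω⁻¹ := by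
    have hz : (2 * Real.pi * Complex.I / p) = ((2 * Real.pi / p : ℝ) : ℂ) * Complex.I := by
      push_cast; ring
    rw [hω, hz, ← Complex.exp_conj, _root_.map_mul, Complex.conj_ofReal, Complex.conj_I, mul_neg,
      Complex.exp_neg]
  have hunit : ω * (starRingEnd ℂ) ω = 1 := by rw [hconj, mul_inv_cancel₀ hω0]
  have hωp : ω ^ p = 1 := by
    rw [hω, ← Complex.exp_nat_mul,
      show (p : ℂ) * (2 * Real.pi * Complex.I / p) = 2 * Real.pi * Complex.I by
        field_simp]
    exact Complex.exp_two_pi_mul_I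
  have key : ∀ n : ℕ, ω ^ n = ω ^ (n % p) := by
    intro n
    conv_lhs => rw [← Nat.mod_add_div n p]
    rw [pow_add, pow_mul, hωp, one_pow, mul_one]
  set χ : ZMod p → ℂ := fun s => ω ^ s.val with hχdef
  have hχ : ∀ s t : ZMod p, χ (s + t) = χ s * χ t := by
    intro s t
    simp only [hχdef]
    rw [ZMod.val_add, ← key, pow_add]
  have hχunit : ∀ k : ZMod p, χ k * (starRingEnd ℂ) (χ k) = 1 := by
    intro k
    simp only [hχdef, map_pow, ← mul_pow, hunit, one_pow]
  have hΩ' : ∀ j k' : ZMod p, Ω j k' = χ (j * k') / (Real.sqrt p : ℂ) := by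
    intro j k'
    rw [hΩ]
    simp only [hχdef]
    rw [ZMod.val_mul, ← key]
  have hshift : ∀ k s : ZMod p, Ω k (s + 1) = χ k * Ω k s := by
    intro k s
    rw [hΩ', hΩ', mul_add, mul_one, hχ, mul_comm (χ (k*s)) (χ k), mul_div_assoc]
  have hPe : ∀ k i j : ZMod p, P k i j = (starRingEnd ℂ) (Ω k i) * Ω k j := by
    intro k i j
    rw [hP]
    simp [Matrix.mul_apply, Matrix.single, Matrix.conjTranspose_apply,
      ite_and, ite_mul, mul_ite, Finset.sum_ite_eq, Finset.sum_ite_eq']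
  have hc : ∀ k s t : ZMod p,
      Ω k (s + 1) * (starRingEnd ℂ) (Ω k (t + 1)) = Ω k s * (starRingEnd ℂ) (Ω k t) := by
    intro k s t
    rw [hshift, hshift, _root_.map_mul]
    calc χ k * Ω k s * ((starRingEnd ℂ) (χ k) * (starRingEnd ℂ) (Ω k t))
        = (χ k * (starRingEnd ℂ) (χ k)) * (Ω k s * (starRingEnd ℂ) (Ω k t)) := by ring
      _ = Ω k s * (starRingEnd ℂ) (Ω k t) := by rw [hχunit, one_mul]
  have shift_sum : ∀ (F : ZMod p → ℂ), ∑ s, F (s + 1) = ∑ s, F s := fun F =>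
    Fintype.sum_equiv (Equiv.addRight 1) _ _ (fun s => rfl)
  have hmul2 : ∀ (A B : Matrix (ZMod p) (ZMod p) C(M, ℂ)) (i j : ZMod p) (x : M),
      (A * B) i j x = ∑ s, A i s x * B s j x := by
    intro A B i j x
    simp only [Matrix.mul_apply, ContinuousMap.sum_apply, ContinuousMap.mul_apply]
  have hmul3 : ∀ (A B C : Matrix (ZMod p) (ZMod p) C(M, ℂ)) (i j : ZMod p) (x : M),
      (A * B * C) i j x = ∑ t, (∑ s, A i s x * B s t x) * C t j x := by
    intro A B C i j x
    simp only [Matrix.mul_apply, ContinuousMap.sum_apply, ContinuousMap.mul_apply]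
  have main : ∀ k : ZMod p, ∀ a, DPred p θ a → ∃ g : C(M, ℂ), (∀ x, g (θ x) = g x) ∧
      (∀ x, g x = (Ω * (Matrix.of fun i j : ZMod p => a i j x) * Ωᴴ) k k) ∧
      (∀ i j : ZMod p, ∀ x : M, (Pc k * a * Pc k) i j x = g x * P k i j) := by
    intro k a ha
    refine ⟨∑ s : ZMod p, ∑ t : ZMod p,
      ContinuousMap.const M (Ω k s * (starRingEnd ℂ) (Ω k t)) * a s t, ?_, ?_, ?_⟩
    · intro x
      simp only [ContinuousMap.sum_apply, ContinuousMap.mul_apply, ContinuousMap.const_apply]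
      have step1 : ∀ s t : ZMod p, Ω k s * (starRingEnd ℂ) (Ω k t) * a s t (θ x)
          = Ω k (s+1) * (starRingEnd ℂ) (Ω k (t+1)) * a (s+1) (t+1) x := by
        intro s t
        rw [hc, ha]
      calc ∑ s, ∑ t, Ω k s * (starRingEnd ℂ) (Ω k t) * a s t (θ x)
          = ∑ s, ∑ t, Ω k (s+1) * (starRingEnd ℂ) (Ω k (t+1)) * a (s+1) (t+1) x :=
            Finset.sum_congr rfl fun s _ => Finset.sum_congr rfl fun t _ => step1 s t
        _ = ∑ s, ∑ t, Ω k s * (starRingEnd ℂ) (Ω k t) * a s t x := by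
            rw [shift_sum fun s => ∑ t, Ω k s * (starRingEnd ℂ) (Ω k (t+1)) * a s (t+1) x]
            exact Finset.sum_congr rfl fun s _ =>
              shift_sum fun t => Ω k s * (starRingEnd ℂ) (Ω k t) * a s t x
    · intro x
      simp only [ContinuousMap.sum_apply, ContinuousMap.mul_apply, ContinuousMap.const_apply,
        Matrix.mul_apply, Matrix.conjTranspose_apply, Matrix.of_apply, Finset.sum_mul,
        RCLike.star_def]
      rw [Finset.sum_comm]
      exact Finset.sum_congr rfl fun t _ => Finset.sum_congr rfl fun s _ => by ring
    · intro i j x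
      rw [hmul3]
      simp only [hPc, ContinuousMap.const_apply, hPe, ContinuousMap.sum_apply,
        ContinuousMap.mul_apply, Finset.sum_mul]
      rw [Finset.sum_comm]
      exact Finset.sum_congr rfl fun t _ => Finset.sum_congr rfl fun s _ => by ring
  intro a ha k
  refine ⟨main k a ha, ?_⟩
  intro b hb
  obtain ⟨ga, _, _, hga⟩ := main k a ha
  obtain ⟨gb, _, _, hgb⟩ := main k b hb
  ext i j x
  rw [hmul2, hmul2]
  calc ∑ s, (Pc k * a * Pc k) i s x * (Pc k * b * Pc k) s j x
      = ∑ s, (ga x * P k i s) * (gb x * P k s j) :=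
        Finset.sum_congr rfl fun s _ => by rw [hga, hgb]
    _ = ∑ s, (gb x * P k i s) * (ga x * P k s j) :=
        Finset.sum_congr rfl fun s _ => by ring
    _ = ∑ s, (Pc k * b * Pc k) i s x * (Pc k * a * Pc k) s j x :=
        Finset.sum_congr rfl fun s _ => by rw [hga, hgb]
end

section
/- Assume that M₀ = M \ M_θ is dense in M. If a ∈ D(M,θ) satisfies a·c = 0 for every c ∈ D(M₀,θ), then a = 0. (Equivalently, D(M₀,θ) is an essential ideal of D(M,θ).) -/
open Matrix

/-- if `M₀ = M \ M_θ` is dense in `M` and `a ∈ D(M,θ)` satisfies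
`a·c = 0` for every `c ∈ D(M₀,θ)` (i.e. every `c ∈ D(M,θ)` vanishing entrywise on
`M_θ`), then `a = 0`; so `D(M₀,θ)` is an essential ideal of `D(M,θ)`. -/
theorem stmt_11 {M : Type*} [TopologicalSpace M] [CompactSpace M] [T2Space M]
    (p : ℕ) (hp : p.Prime) [NeZero p] (θ : M ≃ₜ M) (hθ : ∀ x, (⇑θ)^[p] x = x)
    (hdense : Dense {x : M | θ x ≠ x})
    (a : Matrix (ZMod p) (ZMod p) C(M, ℂ)) (ha : DPred p θ a)
    (h : ∀ c : Matrix (ZMod p) (ZMod p) C(M, ℂ), DPred p θ c →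
      (∀ i j : ZMod p, ∀ x : M, θ x = x → c i j x = 0) → a * c = 0) :
    a = 0 := by
  haveI : Fact (1 < p) := ⟨hp.one_lt⟩
  have hpid : (⇑θ)^[p] = id := funext hθ
  have hmod : ∀ m : ℕ, (⇑θ)^[m] = (⇑θ)^[m % p] := by
    intro m
    conv_lhs => rw [← Nat.mod_add_div m p]
    rw [Function.iterate_add, Function.iterate_mul, hpid, Function.iterate_id]
    simp
  have hsucc : ∀ k : ZMod p, (⇑θ)^[(k + 1).val] = (⇑θ)^[k.val] ∘ ⇑θ := by
    intro k
    rw [ZMod.val_add, ZMod.val_one, ← hmod, Function.iterate_succ]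
  have hMθclosed : IsClosed {x : M | θ x = x} :=
    isClosed_eq θ.continuous continuous_id
  have key : ∀ i j : ZMod p, ∀ x : M, θ x ≠ x → a i j x = 0 := by
    intro i j x hx
    set y := (⇑θ)^[j.val] x with hy
    have hyne : θ y ≠ y := by
      intro hfix
      apply hx
      have h2 : (⇑θ)^[j.val] (θ x) = (⇑θ)^[j.val] x := by
        rw [← Function.iterate_succ_apply, Function.iterate_succ_apply']
        exact hfix
      exact θ.injective.iterate j.val h2
    obtain ⟨f, hf0, hf1, -⟩ := exists_continuous_zero_one_of_isClosed hMθclosed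
      (isClosed_singleton (x := y))
      (by simpa [Set.disjoint_singleton_right] using hyne)
    set g : C(M, ℂ) := ⟨fun z => (f z : ℂ), Complex.continuous_ofReal.comp f.continuous⟩
      with hg
    set c : Matrix (ZMod p) (ZMod p) C(M, ℂ) := fun k l =>
      if k = l then ⟨fun z => g ((⇑θ)^[k.val] z),
        g.continuous.comp (θ.continuous.iterate _)⟩ else 0 with hc
    have hcD : DPred p θ c := by
      intro k l z
      by_cases hkl : k = l
      · subst hkl
        simp only [hc, if_pos rfl, ContinuousMap.coe_mk]
        rw [hsucc]
        rfl
      · have : k + 1 ≠ l + 1 := fun hcontra => hkl (by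
          have := add_right_cancel hcontra; exact this)
        simp [hc, if_neg hkl, if_neg this]
    have hcvan : ∀ k l : ZMod p, ∀ z : M, θ z = z → c k l z = 0 := by
      intro k l z hz
      by_cases hkl : k = l
      · subst hkl
        simp only [hc, if_pos rfl, ContinuousMap.coe_mk]
        rw [Function.iterate_fixed hz]
        have : f z = 0 := hf0 hz
        simp [hg, this]
      · simp [hc, if_neg hkl]
    have hac := h c hcD hcvan
    have h0 : ((a * c) i j) x = 0 := by rw [hac]; rfl
    rw [Matrix.mul_apply] at h0
    rw [ContinuousMap.sum_apply] at h0
    have hsum : ∑ k : ZMod p, (a i k * c k j) x = a i j x * g y := by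
      rw [Finset.sum_eq_single j]
      · simp [hc, hy]
      · intro k _ hk
        simp [hc, if_neg hk]
      · simp
    rw [hsum] at h0
    have hgy : g y = 1 := by
      have : f y = 1 := hf1 rfl
      simp [hg, this]
    rw [hgy, mul_one] at h0
    exact h0
  ext i j x
  have hcont : Continuous fun z => a i j z := (a i j).continuous
  have heq : (fun z => a i j z) = fun _ => (0 : ℂ) :=
    Continuous.ext_on hdense hcont continuous_const (fun z hz => key i j z hz)
  have := congrFun heq x
  simpa using this
end

section
/- Assume X \ K is dense in X. If b ∈ A(X,K) commutes with every element of A(X,K), then there exists h ∈ C(X,ℂ) such that b = h·1_p, i.e., b is the scalar matrix with diagonal entries all equal to h. -/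
open Matrix

/-- `APred p K a` says that the matrix `a ∈ M_p(C(X,ℂ))` lies in `A(X,K)`, i.e. its
off-diagonal entries vanish at every point of `K`. -/
def APred {X : Type*} [TopologicalSpace X] (p : ℕ) (K : Set X)
    (a : Matrix (Fin p) (Fin p) C(X, ℂ)) : Prop :=
  ∀ i j : Fin p, i ≠ j → ∀ x ∈ K, a i j x = 0

/-- if `X \ K` is dense in `X` and `b ∈ A(X,K)` commutes with every
element of `A(X,K)`, then `b = h·1_p` for some `h ∈ C(X,ℂ)`. -/
theorem stmt_12 {X : Type*} [TopologicalSpace X] [CompactSpace X] [T2Space X]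
    (p : ℕ) (hp : 2 ≤ p) (K : Set X) (hK : IsClosed K) (hdense : Dense Kᶜ)
    (b : Matrix (Fin p) (Fin p) C(X, ℂ)) (hb : APred p K b)
    (hcomm : ∀ c : Matrix (Fin p) (Fin p) C(X, ℂ), APred p K c → b * c = c * b) :
    ∃ h : C(X, ℂ), b = Matrix.diagonal (fun _ => h) := by
  -- step 1: b is diagonal
  have hdiag : ∀ i j : Fin p, i ≠ j → b i j = 0 := by
    intro i j hij
    have hA : APred p K (Matrix.single j j (1 : C(X, ℂ))) := by
      intro k l hkl x hx
      rcases ne_or_eq k j with h | h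
      · simp [Matrix.single_apply_of_row_ne (Ne.symm h)]
      · subst h
        simp [Matrix.single_apply_of_col_ne (hj := hkl)]
    have := hcomm _ hA
    have h1 : (b * Matrix.single j j (1 : C(X, ℂ))) i j
        = (Matrix.single j j (1 : C(X, ℂ)) * b) i j := by rw [this]
    rw [Matrix.mul_single_apply_same,
      Matrix.single_mul_apply_of_ne _ _ _ _ _ hij] at h1
    simpa using h1
  -- step 2: all diagonal entries agree
  have hsame : ∀ i j : Fin p, b i i = b j j := by
    intro i j
    rcases eq_or_ne i j with rfl | hij
    · rfl
    have key : ∀ f : C(X, ℂ), (∀ x ∈ K, f x = 0) → b i i * f = f * b j j := by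
      intro f hf
      have hA : APred p K (Matrix.single i j f) := by
        intro k l hkl x hx
        rcases ne_or_eq k i with h | h
        · simp [Matrix.single_apply_of_row_ne (Ne.symm h)]
        · subst h
          rcases ne_or_eq l j with h2 | h2
          · simp [Matrix.single_apply_of_col_ne (hj := Ne.symm h2)]
          · subst h2; simpa using hf x hx
      have := hcomm _ hA
      have h1 : (b * Matrix.single i j f) i j
          = (Matrix.single i j f * b) i j := by rw [this]
      rwa [Matrix.mul_single_apply_same,
        Matrix.single_mul_apply_same] at h1
    -- for each x ∉ K produce a Urysohn function
    have heq : ∀ x ∈ Kᶜ, b i i x = b j j x := by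
      intro x hx
      obtain ⟨f, hf0, hf1, -⟩ := exists_continuous_zero_one_of_isClosed hK
        (isClosed_singleton (x := x)) (by simpa [Set.disjoint_singleton_right] using hx)
      set g : C(X, ℂ) := ⟨fun y => (f y : ℂ), Complex.continuous_ofReal.comp f.continuous⟩
      have hg0 : ∀ y ∈ K, g y = 0 := by
        intro y hy
        have := hf0 hy
        simp only [g, ContinuousMap.coe_mk]
        rw [show f y = 0 from this]; simp
      have := key g hg0
      have hx1 : g x = 1 := by
        have := hf1 (Set.mem_singleton x)
        simp only [g, ContinuousMap.coe_mk]
        rw [show f x = 1 from this]; simp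
      have h2 := congrArg (fun φ : C(X, ℂ) => φ x) this
      simp only [ContinuousMap.mul_apply, hx1, mul_one, one_mul] at h2
      exact h2
    have : ⇑(b i i) = ⇑(b j j) :=
      Continuous.ext_on hdense (b i i).continuous (b j j).continuous heq
    exact ContinuousMap.ext (congrFun this)
  -- conclude
  refine ⟨b ⟨0, by omega⟩ ⟨0, by omega⟩, ?_⟩
  ext i j
  rcases eq_or_ne i j with rfl | hij
  · simp [Matrix.diagonal_apply_eq, hsame i ⟨0, by omega⟩]
  · simp [Matrix.diagonal_apply_ne _ hij, hdiag i j hij]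
end

section
/- Let φ : A(X,K) → ℂ be a continuous unital algebra homomorphism. Then there exist an index i ∈ {1,…,p} and a point x₀ ∈ K such that φ(a) = a_{i,i}(x₀) for every a ∈ A(X,K). -/
open Matrix

lemma apred_std {X : Type*} [TopologicalSpace X] (p : ℕ) (K : Set X)
    (i j : Fin p) (c : C(X, ℂ)) (h : i ≠ j → ∀ x ∈ K, c x = 0) :
    APred p K (Matrix.single i j c) := by
  intro i' j' hne x hx
  by_cases hij : i = i' ∧ j = j'
  · obtain ⟨rfl, rfl⟩ := hij
    simpa [Matrix.single] using h hne x hx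
  · simp [Matrix.single, hij]

lemma apred_zero {X : Type*} [TopologicalSpace X] (p : ℕ) (K : Set X) :
    APred p K 0 := by intro i j _ x _; simp

lemma apred_add {X : Type*} [TopologicalSpace X] {p : ℕ} {K : Set X}
    {a b : Matrix (Fin p) (Fin p) C(X, ℂ)} (ha : APred p K a) (hb : APred p K b) :
    APred p K (a + b) := by
  intro i j hne x hx
  simp [ha i j hne x hx, hb i j hne x hx]

lemma apred_mul {X : Type*} [TopologicalSpace X] {p : ℕ} {K : Set X}
    {a b : Matrix (Fin p) (Fin p) C(X, ℂ)} (ha : APred p K a) (hb : APred p K b) :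
    APred p K (a * b) := by
  intro i j hne x hx
  simp only [Matrix.mul_apply, ContinuousMap.coe_sum, Finset.sum_apply,
    ContinuousMap.mul_apply]
  refine Finset.sum_eq_zero fun l _ => ?_
  by_cases hl : l = i
  · subst hl
    rw [hb l j hne x hx, mul_zero]
  · rw [ha i l (fun h => hl h.symm) x hx, zero_mul]

lemma apred_sum {X : Type*} [TopologicalSpace X] {p : ℕ} {K : Set X}
    {ι : Type*} (s : Finset ι) (f : ι → Matrix (Fin p) (Fin p) C(X, ℂ))
    (hf : ∀ i ∈ s, APred p K (f i)) : APred p K (∑ i ∈ s, f i) := by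
  classical
  induction s using Finset.induction with
  | empty => simpa using apred_zero p K
  | insert _ _ hx ih =>
    rw [Finset.sum_insert hx]
    exact apred_add (hf _ (Finset.mem_insert_self _ _))
      (ih fun i hi => hf i (Finset.mem_insert_of_mem hi))

/-- every continuous unital algebra homomorphism `φ : A(X,K) → ℂ`
is of the form `a ↦ a_{i,i}(x₀)` for some index `i` and some point `x₀ ∈ K`. -/
theorem stmt_13 {X : Type*} [TopologicalSpace X] [CompactSpace X] [T2Space X]
    (p : ℕ) (hp : 2 ≤ p) (K : Set X) (hK : IsClosed K)
    (φ : Matrix (Fin p) (Fin p) C(X, ℂ) → ℂ)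
    (hcont : ContinuousOn φ {a | APred p K a})
    (hadd : ∀ a b, APred p K a → APred p K b → φ (a + b) = φ a + φ b)
    (hmul : ∀ a b, APred p K a → APred p K b → φ (a * b) = φ a * φ b)
    (hsmul : ∀ (c : ℂ) a, APred p K a → φ (c • a) = c * φ a)
    (hone : φ 1 = 1) :
    ∃ (i : Fin p) (x₀ : X), x₀ ∈ K ∧ ∀ a, APred p K a → φ a = a i i x₀ := by
  classical
  have h0 : φ 0 = 0 := by
    have := hsmul 0 0 (apred_zero p K)
    simpa using this
  -- φ of finite sums
  have hφsum : ∀ {ι : Type} (s : Finset ι) (f : ι → Matrix (Fin p) (Fin p) C(X, ℂ)),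
      (∀ i ∈ s, APred p K (f i)) → φ (∑ i ∈ s, f i) = ∑ i ∈ s, φ (f i) := by
    intro ι s f hf
    induction s using Finset.induction with
    | empty => simpa using h0
    | insert _ _ hx ih =>
      rw [Finset.sum_insert hx, Finset.sum_insert hx,
        hadd _ _ (hf _ (Finset.mem_insert_self _ _))
          (apred_sum _ _ fun i hi => hf i (Finset.mem_insert_of_mem hi)),
        ih fun i hi => hf i (Finset.mem_insert_of_mem hi)]
  -- matrix units
  set E : Fin p → Matrix (Fin p) (Fin p) C(X, ℂ) :=
    fun j => Matrix.single j j (1 : C(X, ℂ)) with hEdef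
  have hE : ∀ j, APred p K (E j) := fun j => apred_std p K j j 1 (fun h => absurd rfl h)
  have hEsum : (∑ j, E j) = 1 := by
    ext a b
    simp only [Matrix.sum_apply, hEdef, Matrix.single, Matrix.of_apply, Matrix.one_apply]
    by_cases hab : a = b
    · subst hab
      rw [Finset.sum_eq_single a (fun j _ hj => if_neg (fun h => hj h.1)) (by simp)]
      simp
    · rw [Finset.sum_eq_zero (fun j _ => if_neg (fun h => hab (h.1.symm.trans h.2)))]
      simp [hab]
  set t : Fin p → ℂ := fun j => φ (E j) with htdef
  have hidem : ∀ j, t j = 0 ∨ t j = 1 := by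
    intro j
    have h1 : t j * t j = t j := by
      simp only [htdef]
      rw [← hmul _ _ (hE j) (hE j)]
      congr 1
      simp [hEdef, Matrix.single_mul_single_same]
    have h2 : t j * (t j - 1) = 0 := by ring_nf; linear_combination h1
    rcases mul_eq_zero.mp h2 with h | h
    · exact Or.inl h
    · exact Or.inr (by linear_combination h)
  have hsumt : (∑ j, t j) = 1 := by
    simp only [htdef]
    rw [← hφsum Finset.univ E (fun j _ => hE j), hEsum, hone]
  obtain ⟨i, hi⟩ : ∃ i, t i = 1 := by
    by_contra h
    push_neg at h
    have : ∀ j, t j = 0 := fun j => (hidem j).resolve_right (h j)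
    rw [Finset.sum_congr rfl fun j _ => this j] at hsumt
    simp at hsumt
  have hti0 : ∀ j, j ≠ i → t j = 0 := by
    intro j hj
    have h3 : φ (E i * E j) = t i * t j := hmul _ _ (hE i) (hE j)
    simp only [hEdef] at h3
    have h4 : Matrix.single i i (1 : C(X, ℂ)) * Matrix.single j j 1 = 0 :=
      Matrix.single_mul_single_of_ne (c := (1 : C(X, ℂ))) i i j (fun h => hj h.symm) 1
    rw [h4, h0, hi, one_mul] at h3
    exact h3.symm
  -- ψ
  set ψ : C(X, ℂ) → ℂ := fun c => φ (Matrix.single i i c) with hψdef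
  have hAstd' : ∀ c : C(X, ℂ), APred p K (Matrix.single i i c) :=
    fun c => apred_std p K i i c (fun h => absurd rfl h)
  have key : ∀ (j k : Fin p) (c : C(X, ℂ)), APred p K (Matrix.single j k c) →
      φ (Matrix.single j k c) = if j = i ∧ k = i then ψ c else 0 := by
    intro j k c hM
    by_cases hji : j = i
    · by_cases hki : k = i
      · subst hji; subst hki; simp [hψdef]
      · -- multiply on the right by E k
        have h1 : Matrix.single j k c * E k = Matrix.single j k c := by
          simp [hEdef, Matrix.single_mul_single_same]
        have h6 := hmul _ _ hM (hE k)
        rw [h1, show φ (E k) = (0 : ℂ) from hti0 k hki, mul_zero] at h6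
        simpa [hki] using h6
    · have h1 : E j * Matrix.single j k c = Matrix.single j k c := by
        simp [hEdef, Matrix.single_mul_single_same]
      have h6 := hmul _ _ (hE j) hM
      rw [h1, show φ (E j) = (0 : ℂ) from hti0 j hji, zero_mul] at h6
      simpa [hji] using h6
  -- main formula : φ a = ψ (a i i)
  have main : ∀ a, APred p K a → φ a = ψ (a i i) := by
    intro a ha
    have hstd : ∀ j k : Fin p, APred p K (Matrix.single j k (a j k)) :=
      fun j k => apred_std p K j k _ (fun h x hx => ha j k h x hx)
    conv_lhs => rw [matrix_eq_sum_single a]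
    rw [hφsum Finset.univ _ (fun j _ => apred_sum _ _ fun k _ => hstd j k)]
    rw [Finset.sum_congr rfl fun j _ => hφsum Finset.univ _ (fun k _ => hstd j k)]
    rw [Finset.sum_congr rfl fun j _ => Finset.sum_congr rfl fun k _ => key j k _ (hstd j k)]
    rw [Finset.sum_eq_single i]
    · rw [Finset.sum_eq_single i]
      · simp
      · intro k _ hk; simp [hk]
      · simp
    · intro j _ hj
      exact Finset.sum_eq_zero fun k _ => by simp [hj]
    · simp
  -- ψ is a character; Gelfand
  have hψcont : Continuous ψ := by
    have hD : Continuous (fun c : C(X, ℂ) => Matrix.single i i c) := by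
      apply continuous_matrix
      intro a b
      by_cases ha : i = a
      · subst ha
        by_cases hb : i = b
        · subst hb
          simpa [Matrix.single] using (continuous_id' : Continuous fun c : C(X, ℂ) => c)
        · simpa [Matrix.single, hb] using continuous_const
      · simpa [Matrix.single, ha] using continuous_const
    exact hcont.comp_continuous hD (fun c => hAstd' c)
  set χ : WeakDual.characterSpace ℂ C(X, ℂ) :=
    ⟨{ toFun := ψ
       map_add' := fun c d => by
         simp only [hψdef]
         rw [Matrix.single_add, hadd _ _ (hAstd' c) (hAstd' d)]
       map_smul' := fun r c => by
         simp only [hψdef, RingHom.id_apply]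
         rw [← smul_single, hsmul r _ (hAstd' c), smul_eq_mul]
       cont := hψcont }, by
       rw [WeakDual.CharacterSpace.eq_set_map_one_map_mul]
       constructor
       · show ψ 1 = 1
         exact hi
       · intro c d
         show ψ (c * d) = ψ c * ψ d
         simp only [hψdef]
         rw [← Matrix.single_mul_single_same (j := i), hmul _ _ (hAstd' c) (hAstd' d)]⟩
  obtain ⟨x₀, hx₀⟩ := (WeakDual.CharacterSpace.homeoEval X ℂ).surjective χ
  have hψeval : ∀ c : C(X, ℂ), ψ c = c x₀ := by
    intro c
    exact (congrArg (fun ξ : WeakDual.characterSpace ℂ C(X, ℂ) => ξ c) hx₀).symm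
  -- x₀ ∈ K
  have hx₀K : x₀ ∈ K := by
    by_contra hxK
    haveI : Nontrivial (Fin p) := Fin.nontrivial_iff_two_le.mpr hp
    obtain ⟨j, hj⟩ := exists_ne i
    obtain ⟨f, hf0, hf1, -⟩ := exists_continuous_zero_one_of_isClosed hK
      (isClosed_singleton : IsClosed {x₀}) (Set.disjoint_singleton_right.mpr hxK)
    set g : C(X, ℂ) := (ContinuousMap.mk Complex.ofReal Complex.continuous_ofReal).comp f
      with hgdef
    have hgK : ∀ x ∈ K, g x = 0 := by
      intro x hx
      simp [hgdef, hf0 hx]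
    have hgx₀ : g x₀ = 1 := by
      simp [hgdef, hf1 rfl]
    set u := Matrix.single i j g with hudef
    set v := Matrix.single j i g with hvdef
    have hu : APred p K u := apred_std p K i j g fun _ => hgK
    have hv : APred p K v := apred_std p K j i g fun _ => hgK
    have huv : u * v = Matrix.single i i (g * g) := by
      simp [hudef, hvdef, Matrix.single_mul_single_same]
    have h1 : φ (u * v) = 1 := by
      rw [huv]
      have h4 := hψeval (g * g)
      simp only [hψdef] at h4
      rw [h4]
      simp [hgx₀]
    have h2 : φ u = 0 := by
      rw [main u hu, hψeval]
      have h5 : u i i = 0 := by simp [hudef, Matrix.single, hj]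
      rw [h5]
      simp
    rw [hmul _ _ hu hv, h2, zero_mul] at h1
    exact zero_ne_one h1
  exact ⟨i, x₀, hx₀K, fun a ha => by rw [main a ha, hψeval]⟩
end

section
/- Let M and M' be compact Hausdorff spaces, θ : M → M and θ' : M' → M' homeomorphisms with θ^p = id and θ'^p = id (p prime), and assume M_θ ≠ ∅ and M'_{θ'} ≠ ∅. Then every unital star-algebra isomorphism Δ : D(M',θ') → D(M,θ) maps D(M'₀,θ') onto D(M₀,θ); that is, Δ carries the ideal of matrices vanishing on M'_{θ'} exactly onto the ideal of matrices vanishing on M_θ. -/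
open Matrix

set_option linter.unusedSectionVars false
set_option linter.unusedVariables false

namespace Stmt15Aux

variable {M : Type*} [TopologicalSpace M] {p : ℕ} [NeZero p]

section basic
variable {θ : M → M} {a b : Matrix (ZMod p) (ZMod p) C(M, ℂ)}

lemma dpred_zero : DPred p θ (0 : Matrix (ZMod p) (ZMod p) C(M, ℂ)) := by
  intro i j x; simp

lemma dpred_one : DPred p θ (1 : Matrix (ZMod p) (ZMod p) C(M, ℂ)) := by
  intro i j x
  by_cases h : i = j <;> simp [Matrix.one_apply, h]

lemma dpred_add (ha : DPred p θ a) (hb : DPred p θ b) : DPred p θ (a + b) := by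
  intro i j x
  simp [Matrix.add_apply, ha i j x, hb i j x]

lemma dpred_smul (c : ℂ) (ha : DPred p θ a) : DPred p θ (c • a) := by
  intro i j x
  simp [Matrix.smul_apply, ha i j x]

lemma dpred_mul (ha : DPred p θ a) (hb : DPred p θ b) : DPred p θ (a * b) := by
  intro i j x
  rw [Matrix.mul_apply, Matrix.mul_apply, ContinuousMap.sum_apply, ContinuousMap.sum_apply]
  symm
  refine Fintype.sum_equiv (Equiv.addRight (1 : ZMod p)) _ _ (fun k => ?_)
  simp only [Equiv.coe_addRight, ContinuousMap.mul_apply]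
  rw [ha i k x, hb k j x]

lemma dpred_sum {ι : Type*} (s : Finset ι) (F : ι → Matrix (ZMod p) (ZMod p) C(M, ℂ))
    (h : ∀ i ∈ s, DPred p θ (F i)) : DPred p θ (∑ i ∈ s, F i) := by
  induction s using Finset.cons_induction with
  | empty => simpa using (dpred_zero (p := p) (θ := θ))
  | cons i s hi ih =>
    rw [Finset.sum_cons]
    exact dpred_add (h _ (Finset.mem_cons_self _ _))
      (ih fun j hj => h _ (Finset.mem_cons_of_mem hj))

lemma entry_shift (ha : DPred p θ a) :
    ∀ (n : ℕ) (j : ZMod p) (x : M), a (n : ZMod p) (j + (n : ZMod p)) x = a 0 j (θ^[n] x) := by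
  intro n
  induction n with
  | zero => simp
  | succ n ih =>
    intro j x
    have h1 : ((n + 1 : ℕ) : ZMod p) = (n : ZMod p) + 1 := by push_cast; ring
    have h2 : j + ((n : ZMod p) + 1) = (j + (n : ZMod p)) + 1 := by ring
    rw [h1, h2, ha (n : ZMod p) (j + (n : ZMod p)) x, ih j (θ x),
      Function.iterate_succ_apply]

lemma entry_eq (ha : DPred p θ a) (i j : ZMod p) (x : M) :
    a i j x = a 0 (j - i) (θ^[i.val] x) := by
  have h := entry_shift ha i.val (j - i) x
  rwa [ZMod.natCast_val, ZMod.cast_id, sub_add_cancel] at h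

lemma entry_fixed (ha : DPred p θ a) {x : M} (hx : θ x = x) (i j : ZMod p) :
    a i j x = a 0 (j - i) x := by
  rw [entry_eq ha i j x, Function.iterate_fixed hx]

lemma iterate_mul_p (hθ : ∀ x, θ^[p] x = x) : ∀ (t : ℕ) (x : M), θ^[p * t] x = x := by
  intro t
  induction t with
  | zero => simp
  | succ t ih =>
    intro x
    rw [Nat.mul_succ, Function.iterate_add_apply, hθ, ih]

lemma iterate_mod (hθ : ∀ x, θ^[p] x = x) (n : ℕ) (x : M) : θ^[n] x = θ^[n % p] x := by
  conv_lhs => rw [← Nat.mod_add_div n p, Function.iterate_add_apply, iterate_mul_p hθ]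

lemma iterate_val_cast (hθ : ∀ x, θ^[p] x = x) (n : ℕ) (x : M) :
    θ^[((n : ZMod p)).val] x = θ^[n] x := by
  rw [ZMod.val_natCast, ← iterate_mod hθ]

lemma iter_succ_val (hθ : ∀ x, θ^[p] x = x) (i : ZMod p) (x : M) :
    θ^[(i + 1).val] x = θ^[i.val] (θ x) := by
  have h1 : i + 1 = ((i.val + 1 : ℕ) : ZMod p) := by
    push_cast [ZMod.natCast_val, ZMod.cast_id]
    ring
  rw [h1, iterate_val_cast hθ, Function.iterate_succ_apply]

lemma pow_mod {ω : ℂ} (hω : ω ^ p = 1) (n : ℕ) : ω ^ n = ω ^ (n % p) := by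
  conv_lhs => rw [← Nat.mod_add_div n p, pow_add, pow_mul, hω, one_pow, mul_one]

lemma pow_val_add {ω : ℂ} (hω : ω ^ p = 1) (j m : ZMod p) :
    ω ^ (j + m).val = ω ^ j.val * ω ^ m.val := by
  rw [ZMod.val_add, ← pow_mod hω, pow_add]

end basic

section emb
variable (p : ℕ) [NeZero p] (θ : M ≃ₜ M)

/-- iterate of θ as a continuous map -/
noncomputable def iterCM (n : ℕ) : C(M, M) := ⟨(⇑θ)^[n], θ.continuous.iterate n⟩

/-- diagonal embedding of C(M,ℂ) into D(M,θ) -/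
noncomputable def iota (f : C(M, ℂ)) : Matrix (ZMod p) (ZMod p) C(M, ℂ) :=
  fun i j => if i = j then f.comp (iterCM θ i.val) else 0

/-- the shift matrices -/
noncomputable def shiftM (k : ZMod p) : Matrix (ZMod p) (ZMod p) C(M, ℂ) :=
  fun i j => if j = i + k then 1 else 0

variable {p θ}

lemma iota_apply (f : C(M, ℂ)) (i j : ZMod p) (x : M) :
    iota p θ f i j x = if i = j then f ((⇑θ)^[i.val] x) else 0 := by
  by_cases h : i = j <;> simp [iota, h, iterCM]

lemma shiftM_apply (k i j : ZMod p) (x : M) :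
    shiftM (M := M) p k i j x = if j = i + k then 1 else 0 := by
  by_cases h : j = i + k <;> simp [shiftM, h]

lemma dpred_iota (hθ : ∀ x, (⇑θ)^[p] x = x) (f : C(M, ℂ)) : DPred p ⇑θ (iota p θ f) := by
  intro i j x
  rw [iota_apply, iota_apply]
  simp only [add_left_inj]
  by_cases h : i = j
  · rw [if_pos h, if_pos h, iter_succ_val hθ]
  · rw [if_neg h, if_neg h]

lemma iota_add (f g : C(M, ℂ)) : iota p θ (f + g) = iota p θ f + iota p θ g := by
  ext i j x
  rw [Matrix.add_apply, ContinuousMap.add_apply, iota_apply, iota_apply, iota_apply]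
  by_cases h : i = j <;> simp [h]

lemma iota_smul (c : ℂ) (f : C(M, ℂ)) : iota p θ (c • f) = c • iota p θ f := by
  ext i j x
  rw [Matrix.smul_apply, ContinuousMap.smul_apply, iota_apply, iota_apply]
  by_cases h : i = j <;> simp [h]

lemma iota_mul (f g : C(M, ℂ)) : iota p θ (f * g) = iota p θ f * iota p θ g := by
  ext i j x
  rw [Matrix.mul_apply, ContinuousMap.sum_apply, Finset.sum_eq_single i,
    ContinuousMap.mul_apply, iota_apply, iota_apply, iota_apply]
  · by_cases h : i = j <;> simp [h]
  · intro m _ hm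
    rw [ContinuousMap.mul_apply, iota_apply, if_neg (Ne.symm hm), zero_mul]
  · simp

lemma iota_one : iota p θ (1 : C(M, ℂ)) = 1 := by
  ext i j x
  rw [iota_apply]
  by_cases h : i = j <;> simp [h, Matrix.one_apply]

lemma dpred_shiftM (k : ZMod p) : DPred p ⇑θ (shiftM (M := M) p k) := by
  intro i j x
  rw [shiftM_apply, shiftM_apply]
  have h : (j + 1 = i + 1 + k) ↔ (j = i + k) := by
    rw [add_right_comm, add_left_inj]
  simp only [h]

lemma shiftM_mul_shiftM (k l : ZMod p) :
    shiftM (M := M) p k * shiftM (M := M) p l = shiftM (M := M) p (k + l) := by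
  ext i j x
  rw [Matrix.mul_apply, ContinuousMap.sum_apply, Finset.sum_eq_single (i + k),
    ContinuousMap.mul_apply, shiftM_apply, shiftM_apply, shiftM_apply, if_pos rfl, one_mul,
    add_assoc]
  · intro m _ hm
    rw [ContinuousMap.mul_apply, shiftM_apply, if_neg ?_, zero_mul]
    exact fun h => hm (h ▸ rfl)
  · simp

lemma shiftM_zero : shiftM (M := M) p (0 : ZMod p) = 1 := by
  ext i j x
  rw [shiftM_apply, add_zero, Matrix.one_apply]
  by_cases h : i = j <;> simp [h, eq_comm]

lemma iota_mul_shiftM (f : C(M, ℂ)) (k : ZMod p) (i j : ZMod p) (x : M) :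
    (iota p θ f * shiftM (M := M) p k) i j x
      = if j = i + k then f ((⇑θ)^[i.val] x) else 0 := by
  rw [Matrix.mul_apply, ContinuousMap.sum_apply, Finset.sum_eq_single i,
    ContinuousMap.mul_apply, iota_apply, if_pos rfl, shiftM_apply]
  · by_cases h : j = i + k <;> simp [h]
  · intro m _ hm
    rw [ContinuousMap.mul_apply, iota_apply, if_neg (Ne.symm hm), zero_mul]
  · simp

/-- conjugation by the shift implements composition with θ -/
lemma shift_conj (hθ : ∀ x, (⇑θ)^[p] x = x) (f : C(M, ℂ)) :
    shiftM (M := M) p 1 * iota p θ f * shiftM (M := M) p (-1) =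
      iota p θ (f.comp ⟨⇑θ, θ.continuous⟩) := by
  ext i j x
  rw [Matrix.mul_apply, ContinuousMap.sum_apply, Finset.sum_eq_single (j + 1)]
  · rw [ContinuousMap.mul_apply, shiftM_apply, if_pos (by ring), mul_one]
    have h1 : (shiftM (M := M) p 1 * iota p θ f) i (j + 1) x
        = if i + 1 = j + 1 then f ((⇑θ)^[(i + 1).val] x) else 0 := by
      rw [Matrix.mul_apply, ContinuousMap.sum_apply, Finset.sum_eq_single (i + 1),
        ContinuousMap.mul_apply, shiftM_apply, if_pos rfl, one_mul, iota_apply]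
      · intro m _ hm
        rw [ContinuousMap.mul_apply, shiftM_apply, if_neg hm, zero_mul]
      · simp
    rw [h1, iota_apply]
    simp only [add_left_inj]
    by_cases h : i = j
    · rw [if_pos h, if_pos h, iter_succ_val hθ, ← Function.iterate_succ_apply,
        Function.iterate_succ_apply', ContinuousMap.comp_apply, ContinuousMap.coe_mk]
      rfl
    · rw [if_neg h, if_neg h]
  · intro m _ hm
    rw [ContinuousMap.mul_apply, shiftM_apply, if_neg ?_, mul_zero]
    intro h
    exact hm (by rw [h]; ring)
  · simp

/-- decomposition of an element of D(M,θ) into diagonal × shift pieces -/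
lemma decomp {a : Matrix (ZMod p) (ZMod p) C(M, ℂ)} (ha : DPred p ⇑θ a) :
    a = ∑ k : ZMod p, iota p θ (a 0 k) * shiftM (M := M) p k := by
  ext i j x
  rw [Matrix.sum_apply, ContinuousMap.sum_apply, Finset.sum_eq_single (j - i)]
  · rw [iota_mul_shiftM, if_pos (by ring)]
    exact entry_eq ha i j x
  · intro k _ hk
    rw [iota_mul_shiftM, if_neg ?_]
    intro h
    exact hk (by rw [h]; ring)
  · simp

end emb

section charfun
variable {θf : M → M}

/-- the character attached to a fixed point x and a p-th root of unity ω -/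
noncomputable def charFun (x : M) (ω : ℂ) (a : Matrix (ZMod p) (ZMod p) C(M, ℂ)) : ℂ :=
  ∑ k : ZMod p, a 0 k x * ω ^ k.val

lemma char_add (x : M) (ω : ℂ) (a b : Matrix (ZMod p) (ZMod p) C(M, ℂ)) :
    charFun x ω (a + b) = charFun x ω a + charFun x ω b := by
  simp [charFun, Matrix.add_apply, add_mul, Finset.sum_add_distrib]

lemma char_smul (x : M) (ω : ℂ) (c : ℂ) (a : Matrix (ZMod p) (ZMod p) C(M, ℂ)) :
    charFun x ω (c • a) = c * charFun x ω a := by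
  simp [charFun, Matrix.smul_apply, Finset.mul_sum, smul_eq_mul, mul_assoc]

lemma char_one (x : M) (ω : ℂ) :
    charFun x ω (1 : Matrix (ZMod p) (ZMod p) C(M, ℂ)) = 1 := by
  simp only [charFun, Matrix.one_apply]
  rw [Finset.sum_eq_single (0 : ZMod p)]
  · simp
  · intro m _ hm
    simp [Ne.symm hm]
  · simp

lemma char_mul {x : M} {ω : ℂ} (hω : ω ^ p = 1) (hx : θf x = x)
    (a b : Matrix (ZMod p) (ZMod p) C(M, ℂ)) (hb : DPred p θf b) :
    charFun x ω (a * b) = charFun x ω a * charFun x ω b := by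
  unfold charFun
  rw [Finset.sum_mul_sum]
  calc ∑ k : ZMod p, (a * b) 0 k x * ω ^ k.val
      = ∑ k : ZMod p, ∑ j : ZMod p, a 0 j x * b 0 (k - j) x * ω ^ k.val := by
        refine Finset.sum_congr rfl (fun k _ => ?_)
        rw [Matrix.mul_apply, ContinuousMap.sum_apply, Finset.sum_mul]
        refine Finset.sum_congr rfl (fun j _ => ?_)
        rw [ContinuousMap.mul_apply, entry_fixed hb hx j k]
    _ = ∑ j : ZMod p, ∑ k : ZMod p, a 0 j x * b 0 (k - j) x * ω ^ k.val := Finset.sum_comm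
    _ = ∑ j : ZMod p, ∑ m : ZMod p, a 0 j x * ω ^ j.val * (b 0 m x * ω ^ m.val) := by
        refine Finset.sum_congr rfl (fun j _ => ?_)
        refine Fintype.sum_equiv (Equiv.subRight j) _ _ (fun k => ?_)
        have hk : ω ^ k.val = ω ^ j.val * ω ^ (k - j).val := by
          conv_lhs => rw [show k = j + (k - j) by ring]
          exact pow_val_add hω j (k - j)
        simp only [Equiv.subRight_apply]
        rw [hk]
        ring
end charfun

/-- discrete Fourier inversion: if all p-th root-of-unity evaluations of the symbol
vanish, the symbol vanishes. -/
lemma fourier (p : ℕ) [NeZero p] (c : ZMod p → ℂ)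
    (h : ∀ ω : ℂ, ω ^ p = 1 → ∑ k : ZMod p, c k * ω ^ k.val = 0) (k : ZMod p) : c k = 0 := by
  have hp0 : (p : ℂ) ≠ 0 := Nat.cast_ne_zero.mpr (NeZero.ne p)
  set ζ : ℂ := Complex.exp (2 * Real.pi * Complex.I / p) with hζdef
  have hζ : IsPrimitiveRoot ζ p := Complex.isPrimitiveRoot_exp p (NeZero.ne p)
  have hζp : ζ ^ p = 1 := hζ.pow_eq_one
  have hζ0 : ζ ≠ 0 := Complex.exp_ne_zero _
  have hm : ∀ m : ℕ, ∑ j : ZMod p, c j * (ζ ^ m) ^ j.val = 0 := by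
    intro m
    exact h _ (by rw [← pow_mul, mul_comm, pow_mul, hζp, one_pow])
  have key2 : ∑ m ∈ Finset.range p, (((ζ ^ k.val)⁻¹) ^ m * ∑ j : ZMod p, c j * (ζ ^ m) ^ j.val)
      = 0 := Finset.sum_eq_zero fun m _ => by rw [hm, mul_zero]
  have hswap : ∑ m ∈ Finset.range p, (((ζ ^ k.val)⁻¹) ^ m * ∑ j : ZMod p, c j * (ζ ^ m) ^ j.val)
      = ∑ j : ZMod p, c j * ∑ m ∈ Finset.range p, (ζ ^ j.val * (ζ ^ k.val)⁻¹) ^ m := by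
    rw [Finset.sum_congr rfl fun m (_ : m ∈ Finset.range p) => Finset.mul_sum Finset.univ
      (fun j : ZMod p => c j * (ζ ^ m) ^ j.val) (((ζ ^ k.val)⁻¹) ^ m),
      Finset.sum_comm]
    refine Finset.sum_congr rfl (fun j _ => ?_)
    rw [Finset.mul_sum]
    refine Finset.sum_congr rfl (fun m _ => ?_)
    have hpr : (ζ ^ m) ^ j.val = (ζ ^ j.val) ^ m := by
      rw [← pow_mul, ← pow_mul, mul_comm]
    rw [hpr, mul_pow]
    ring
  have hgeom : ∀ j : ZMod p,
      (∑ m ∈ Finset.range p, (ζ ^ j.val * (ζ ^ k.val)⁻¹) ^ m) = if j = k then (p : ℂ) else 0 := by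
    intro j
    by_cases hjk : j = k
    · subst hjk
      rw [mul_inv_cancel₀ (pow_ne_zero _ hζ0)]
      simp
    · have hz1 : ζ ^ j.val * (ζ ^ k.val)⁻¹ ≠ 1 := by
        intro h1
        apply hjk
        have he : ζ ^ j.val = ζ ^ k.val :=
          (mul_inv_eq_one₀ (pow_ne_zero _ hζ0)).mp h1
        exact ZMod.val_injective p (hζ.pow_inj (ZMod.val_lt j) (ZMod.val_lt k) he)
      have hzp : (ζ ^ j.val * (ζ ^ k.val)⁻¹) ^ p = 1 := by
        rw [mul_pow, ← pow_mul, mul_comm j.val p, pow_mul, hζp, one_pow, inv_pow, ← pow_mul,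
          mul_comm k.val p, pow_mul, hζp, one_pow, inv_one, mul_one]
      rw [geom_sum_eq hz1, hzp, sub_self, zero_div, if_neg hjk]
  rw [hswap] at key2
  rw [Finset.sum_congr rfl (fun j _ => by rw [hgeom j])] at key2
  simp only [mul_ite, mul_zero, Finset.sum_ite_eq', Finset.mem_univ, if_pos] at key2
  exact (mul_eq_zero.mp key2).resolve_right hp0

section key
variable {M : Type*} [TopologicalSpace M] [CompactSpace M] [T2Space M] {p : ℕ} [NeZero p]

/-- KEY: any (ℂ-linear, multiplicative, unital) functional on D(M,θ) kills every
element of D(M,θ) whose entries vanish on the fixed-point set. -/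
lemma key (θ : M ≃ₜ M) (hθ : ∀ x, (⇑θ)^[p] x = x)
    (φ : Matrix (ZMod p) (ZMod p) C(M, ℂ) → ℂ)
    (φadd : ∀ a b, DPred p ⇑θ a → DPred p ⇑θ b → φ (a + b) = φ a + φ b)
    (φmul : ∀ a b, DPred p ⇑θ a → DPred p ⇑θ b → φ (a * b) = φ a * φ b)
    (φsmul : ∀ (c : ℂ) a, DPred p ⇑θ a → φ (c • a) = c * φ a)
    (φone : φ 1 = 1)
    (a : Matrix (ZMod p) (ZMod p) C(M, ℂ)) (ha : DPred p ⇑θ a)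
    (hva : ∀ (i j : ZMod p) (x : M), θ x = x → a i j x = 0) : φ a = 0 := by
  classical
  set χ : C(M, ℂ) → ℂ := fun f => φ (iota p θ f) with hχdef
  have χadd : ∀ f g, χ (f + g) = χ f + χ g := fun f g => by
    rw [hχdef]; simp only; rw [iota_add, φadd _ _ (dpred_iota hθ f) (dpred_iota hθ g)]
  have χmul : ∀ f g, χ (f * g) = χ f * χ g := fun f g => by
    rw [hχdef]; simp only; rw [iota_mul, φmul _ _ (dpred_iota hθ f) (dpred_iota hθ g)]
  have χsmul : ∀ (c : ℂ) f, χ (c • f) = c * χ f := fun c f => by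
    rw [hχdef]; simp only; rw [iota_smul, φsmul _ _ (dpred_iota hθ f)]
  have χone : χ 1 = 1 := by rw [hχdef]; simp only; rw [iota_one, φone]
  -- χ takes values in the range of f
  have hrange : ∀ f : C(M, ℂ), ∃ x, f x = χ f := by
    intro f
    by_contra hcon
    push_neg at hcon
    have hne : ∀ x, f x - χ f ≠ 0 := fun x => sub_ne_zero.mpr (hcon x)
    set g : C(M, ℂ) := ⟨fun x => (f x - χ f)⁻¹,
      ((f.continuous.sub continuous_const).inv₀ hne)⟩ with hgdef
    have hfg : (f + (-(χ f)) • 1) * g = 1 := by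
      ext x
      simp only [ContinuousMap.mul_apply, ContinuousMap.add_apply, ContinuousMap.smul_apply,
        ContinuousMap.one_apply, hgdef, ContinuousMap.coe_mk, smul_eq_mul, mul_one]
      rw [show f x + -(χ f) = f x - χ f by ring, mul_inv_cancel₀ (hne x)]
    have h0 : χ ((f + (-(χ f)) • 1) * g) = 0 := by
      rw [χmul, χadd, χsmul, χone]
      ring
    rw [hfg, χone] at h0
    exact one_ne_zero h0
  -- there is a common point
  have hcommon : ∃ x₀ : M, ∀ f : C(M, ℂ), f x₀ = χ f := by
    by_contra hcon
    push_neg at hcon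
    have hemp : (Set.univ : Set M) ∩ ⋂ f : C(M, ℂ), {x | f x = χ f} = ∅ := by
      ext x
      simp only [Set.mem_inter_iff, Set.mem_univ, true_and, Set.mem_iInter, Set.mem_setOf_eq,
        Set.mem_empty_iff_false, iff_false, not_forall]
      obtain ⟨f, hf⟩ := hcon x
      exact ⟨f, hf⟩
    obtain ⟨t, ht⟩ := CompactSpace.isCompact_univ.elim_finite_subfamily_closed _
      (fun f : C(M, ℂ) => isClosed_eq f.continuous continuous_const) hemp
    have hx : ∀ x : M, ∃ f ∈ t, f x ≠ χ f := by
      intro x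
      by_contra hc
      push_neg at hc
      have : x ∈ (Set.univ : Set M) ∩ ⋂ f ∈ t, {x | f x = χ f} := by
        simp only [Set.mem_inter_iff, Set.mem_univ, true_and, Set.mem_iInter, Set.mem_setOf_eq]
        exact fun f hf => hc f hf
      rw [ht] at this
      exact this
    set S : M → ℂ := fun x => ∑ f ∈ t, (f x - χ f) * (starRingEnd ℂ) (f x - χ f) with hSdef
    have hSreal : ∀ x, S x = ((∑ f ∈ t, Complex.normSq (f x - χ f) : ℝ) : ℂ) := by
      intro x
      rw [hSdef]
      push_cast
      exact Finset.sum_congr rfl fun f _ => (Complex.mul_conj _)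
    have hSne : ∀ x, S x ≠ 0 := by
      intro x
      rw [hSreal]
      obtain ⟨f, hf, hne⟩ := hx x
      have hpos : (0 : ℝ) < ∑ f ∈ t, Complex.normSq (f x - χ f) :=
        Finset.sum_pos' (fun g _ => Complex.normSq_nonneg _)
          ⟨f, hf, Complex.normSq_pos.mpr (sub_ne_zero.mpr hne)⟩
      exact_mod_cast hpos.ne'
    have hScont : Continuous S := by
      apply continuous_finset_sum
      intro f _
      exact ((f.continuous.sub continuous_const).mul
        (Complex.continuous_conj.comp (f.continuous.sub continuous_const)))
    set g : C(M, ℂ) → C(M, ℂ) := fun f =>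
      ⟨fun x => (starRingEnd ℂ) (f x - χ f) / S x,
        ((Complex.continuous_conj.comp (f.continuous.sub continuous_const)).div hScont hSne)⟩
      with hgdef
    have hsum : ∑ f ∈ t, (f + (-(χ f)) • 1) * g f = 1 := by
      ext x
      rw [ContinuousMap.sum_apply, ContinuousMap.one_apply]
      have : ∀ f ∈ t, ((f + (-(χ f)) • 1) * g f) x
          = ((f x - χ f) * (starRingEnd ℂ) (f x - χ f)) / S x := by
        intro f _
        simp only [ContinuousMap.mul_apply, ContinuousMap.add_apply, ContinuousMap.smul_apply,
          ContinuousMap.one_apply, hgdef, ContinuousMap.coe_mk, smul_eq_mul, mul_one]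
        rw [show f x + -(χ f) = f x - χ f by ring, mul_div_assoc]
      rw [Finset.sum_congr rfl this, ← Finset.sum_div]
      exact div_self (hSne x)
    have χ_sum : ∀ (s : Finset C(M, ℂ)) (F : C(M, ℂ) → C(M, ℂ)),
        χ (∑ f ∈ s, F f) = ∑ f ∈ s, χ (F f) := by
      intro s F
      induction s using Finset.cons_induction with
      | empty =>
        simp only [Finset.sum_empty]
        have h00 := χsmul 0 0
        rw [zero_smul, zero_mul] at h00
        exact h00
      | cons i s hi ih => rw [Finset.sum_cons, Finset.sum_cons, χadd, ih]
    have h1 : χ (∑ f ∈ t, (f + (-(χ f)) • 1) * g f) = 0 := by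
      rw [χ_sum]
      refine Finset.sum_eq_zero fun f _ => ?_
      rw [χmul, χadd, χsmul, χone]
      ring
    rw [hsum, χone] at h1
    exact one_ne_zero h1
  obtain ⟨x₀, hx₀⟩ := hcommon
  -- x₀ is a fixed point of θ
  have hfix : θ x₀ = x₀ := by
    have hconj : ∀ f : C(M, ℂ), χ (f.comp ⟨⇑θ, θ.continuous⟩) = χ f := by
      intro f
      have h1 : χ (f.comp ⟨⇑θ, θ.continuous⟩) = φ (shiftM (M := M) p 1 * iota p θ f *
          shiftM (M := M) p (-1)) := by
        rw [hχdef]; simp only; rw [shift_conj hθ]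
      rw [h1, φmul _ _ (dpred_mul (dpred_shiftM 1) (dpred_iota hθ f)) (dpred_shiftM (-1)),
        φmul _ _ (dpred_shiftM 1) (dpred_iota hθ f)]
      have h2 : φ (shiftM (M := M) p 1) * φ (shiftM (M := M) p (-1)) = 1 := by
        rw [← φmul _ _ (dpred_shiftM 1) (dpred_shiftM (-1)), shiftM_mul_shiftM,
          add_neg_cancel, shiftM_zero, φone]
      calc φ (shiftM (M := M) p 1) * φ (iota p θ f) * φ (shiftM (M := M) p (-1))
          = φ (shiftM (M := M) p 1) * φ (shiftM (M := M) p (-1)) * φ (iota p θ f) := by ring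
        _ = χ f := by rw [h2, one_mul]
    have hval : ∀ f : C(M, ℂ), f (θ x₀) = f x₀ := by
      intro f
      have := hconj f
      rw [← hx₀ f, ← hx₀ (f.comp ⟨⇑θ, θ.continuous⟩)] at this
      simpa using this
    by_contra hne
    obtain ⟨f, hf0, hf1, -⟩ := exists_continuous_zero_one_of_isClosed
      (isClosed_singleton (x := x₀)) (isClosed_singleton (x := θ x₀))
      (by simp only [Set.disjoint_singleton_left, Set.mem_singleton_iff]
          exact fun h => hne h.symm)
    set F : C(M, ℂ) := ⟨fun x => ((f x : ℝ) : ℂ), Complex.continuous_ofReal.comp f.continuous⟩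
      with hFdef
    have := hval F
    rw [hFdef] at this
    simp only [ContinuousMap.coe_mk] at this
    rw [hf0 (Set.mem_singleton x₀), hf1 (Set.mem_singleton (θ x₀))] at this
    simp at this
  -- decompose a and evaluate
  have hφsum : ∀ (F : ZMod p → Matrix (ZMod p) (ZMod p) C(M, ℂ)),
      (∀ k, DPred p ⇑θ (F k)) → φ (∑ k : ZMod p, F k) = ∑ k : ZMod p, φ (F k) := by
    intro F hF
    have φzero : φ 0 = 0 := by
      have h00 := φsmul 0 0 dpred_zero
      rw [zero_smul, zero_mul] at h00
      exact h00
    induction (Finset.univ : Finset (ZMod p)) using Finset.cons_induction with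
    | empty => simpa using φzero
    | cons i s hi ih =>
      rw [Finset.sum_cons, Finset.sum_cons,
        φadd _ _ (hF i) (dpred_sum s F (fun j _ => hF j)), ih]
  rw [decomp ha, hφsum _ (fun k => dpred_mul (dpred_iota hθ _) (dpred_shiftM k))]
  refine Finset.sum_eq_zero fun k _ => ?_
  rw [φmul _ _ (dpred_iota hθ _) (dpred_shiftM k)]
  have : χ (a 0 k) = 0 := by
    rw [← hx₀ (a 0 k)]
    exact hva 0 k x₀ hfix
  rw [hχdef] at this
  simp only at this
  rw [this, zero_mul]

end key

end Stmt15Aux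

open Stmt15Aux in
/-- if `M_θ ≠ ∅` and `M'_{θ'} ≠ ∅`, every unital star-algebra
isomorphism `Δ : D(M',θ') → D(M,θ)` carries the ideal `D(M'₀,θ')` (matrices vanishing
on `M'_{θ'}`) exactly onto the ideal `D(M₀,θ)` (matrices vanishing on `M_θ`). -/
theorem stmt_15 {M M' : Type*} [TopologicalSpace M] [CompactSpace M] [T2Space M]
    [TopologicalSpace M'] [CompactSpace M'] [T2Space M']
    (p : ℕ) (hp : p.Prime) [NeZero p]
    (θ : M ≃ₜ M) (hθ : ∀ x, (⇑θ)^[p] x = x)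
    (θ' : M' ≃ₜ M') (hθ' : ∀ x, (⇑θ')^[p] x = x)
    (hMθ : ∃ x : M, θ x = x) (hM'θ' : ∃ x : M', θ' x = x)
    (Δ : Matrix (ZMod p) (ZMod p) C(M', ℂ) → Matrix (ZMod p) (ZMod p) C(M, ℂ))
    -- Δ maps D(M',θ') into D(M,θ) ...
    (hmaps : ∀ a, DPred p θ' a → DPred p θ (Δ a))
    -- ... bijectively ...
    (hsurj : ∀ b, DPred p θ b → ∃ a, DPred p θ' a ∧ Δ a = b)
    (hinj : ∀ a b, DPred p θ' a → DPred p θ' b → Δ a = Δ b → a = b)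
    -- ... as a unital star-algebra homomorphism:
    (hadd : ∀ a b, DPred p θ' a → DPred p θ' b → Δ (a + b) = Δ a + Δ b)
    (hmul : ∀ a b, DPred p θ' a → DPred p θ' b → Δ (a * b) = Δ a * Δ b)
    (hsmul : ∀ (c : ℂ) a, DPred p θ' a → Δ (c • a) = c • Δ a)
    (hstar : ∀ a, DPred p θ' a → Δ (star a) = star (Δ a))
    (hone : Δ 1 = 1) :
    ∀ a, DPred p θ' a →
      ((∀ i j : ZMod p, ∀ x : M', θ' x = x → a i j x = 0) ↔
       (∀ i j : ZMod p, ∀ x : M, θ x = x → Δ a i j x = 0)) := by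
  intro a ha
  constructor
  · -- forward: a vanishes on M'_{θ'} ⇒ Δ a vanishes on M_θ
    intro hv i j x hx
    have hfix : ∀ k : ZMod p, Δ a 0 k x = 0 := by
      refine fourier p (fun k => Δ a 0 k x) (fun ω hω => ?_)
      have hkey := key θ' hθ' (fun b => charFun x ω (Δ b))
        (fun b c hb hc => by beta_reduce; rw [hadd b c hb hc, char_add])
        (fun b c hb hc => by
          beta_reduce
          rw [hmul b c hb hc]
          exact char_mul hω hx _ _ (hmaps c hc))
        (fun c b hb => by beta_reduce; rw [hsmul c b hb, char_smul])
        (by beta_reduce; rw [hone, char_one])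
        a ha hv
      simpa [charFun] using hkey
    rw [entry_fixed (hmaps a ha) hx i j]
    exact hfix (j - i)
  · -- backward: Δ a vanishes on M_θ ⇒ a vanishes on M'_{θ'}
    intro hv i j x hx
    classical
    set Inv : Matrix (ZMod p) (ZMod p) C(M, ℂ) → Matrix (ZMod p) (ZMod p) C(M', ℂ) :=
      fun b => if h : DPred p ⇑θ b then (hsurj b h).choose else 0 with hInvdef
    have hInvspec : ∀ b, ∀ hb : DPred p ⇑θ b, DPred p ⇑θ' (Inv b) ∧ Δ (Inv b) = b := by
      intro b hb
      rw [hInvdef]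
      simp only [dif_pos hb]
      exact (hsurj b hb).choose_spec
    have hInvadd : ∀ b c, DPred p ⇑θ b → DPred p ⇑θ c → Inv (b + c) = Inv b + Inv c := by
      intro b c hb hc
      refine hinj _ _ (hInvspec _ (dpred_add hb hc)).1
        (dpred_add (hInvspec b hb).1 (hInvspec c hc).1) ?_
      rw [(hInvspec _ (dpred_add hb hc)).2, hadd _ _ (hInvspec b hb).1 (hInvspec c hc).1,
        (hInvspec b hb).2, (hInvspec c hc).2]
    have hInvmul : ∀ b c, DPred p ⇑θ b → DPred p ⇑θ c → Inv (b * c) = Inv b * Inv c := by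
      intro b c hb hc
      refine hinj _ _ (hInvspec _ (dpred_mul hb hc)).1
        (dpred_mul (hInvspec b hb).1 (hInvspec c hc).1) ?_
      rw [(hInvspec _ (dpred_mul hb hc)).2, hmul _ _ (hInvspec b hb).1 (hInvspec c hc).1,
        (hInvspec b hb).2, (hInvspec c hc).2]
    have hInvsmul : ∀ (c : ℂ) b, DPred p ⇑θ b → Inv (c • b) = c • Inv b := by
      intro c b hb
      refine hinj _ _ (hInvspec _ (dpred_smul c hb)).1
        (dpred_smul c (hInvspec b hb).1) ?_
      rw [(hInvspec _ (dpred_smul c hb)).2, hsmul c _ (hInvspec b hb).1, (hInvspec b hb).2]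
    have hInvone : Inv 1 = 1 :=
      hinj _ _ (hInvspec 1 dpred_one).1 dpred_one
        (by rw [(hInvspec 1 dpred_one).2, hone])
    have hInva : Inv (Δ a) = a :=
      hinj _ _ (hInvspec _ (hmaps a ha)).1 ha (hInvspec _ (hmaps a ha)).2
    have hfix : ∀ k : ZMod p, a 0 k x = 0 := by
      refine fourier p (fun k => a 0 k x) (fun ω hω => ?_)
      have hkey := key θ hθ (fun b => charFun x ω (Inv b))
        (fun b c hb hc => by beta_reduce; rw [hInvadd b c hb hc, char_add])
        (fun b c hb hc => by
          beta_reduce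
          rw [hInvmul b c hb hc]
          exact char_mul hω hx _ _ (hInvspec c hc).1)
        (fun c b hb => by beta_reduce; rw [hInvsmul c b hb, char_smul])
        (by beta_reduce; rw [hInvone, char_one])
        (Δ a) (hmaps a ha) hv
      simpa [charFun, hInva] using hkey
    rw [entry_fixed ha hx i j]
    exact hfix (j - i)
end

section
/- Let T = {z ∈ ℂ : |z| = 1} and let c : T → T be complex conjugation, c(z) = z̄. Let D be the set of all 2×2 matrices over C(T,ℂ) of the form [[f₀, f₁],[f₁∘c, f₀∘c]] with f₀, f₁ ∈ C(T,ℂ). Then D is a unital star-subalgebra of M₂(C(T,ℂ)) and D is star-isomorphic to the algebra B = {f ∈ C([0,1], M₂(ℂ)) : f(0) and f(1) are diagonal matrices}. -/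
open Matrix Complex Real

noncomputable section Stmt16Aux

namespace Stmt16

set_option linter.unusedSectionVars false

abbrev TC := {z : ℂ // ‖z‖ = 1}

def V : Matrix (Fin 2) (Fin 2) ℂ := !![1,1;1,-1]

lemma re_sq_add_im_sq (z : TC) : (z:ℂ).re^2 + (z:ℂ).im^2 = 1 := by
  have h : ‖(z:ℂ)‖ = 1 := z.2
  have h2 := Complex.sq_norm (z:ℂ)
  rw [h] at h2
  rw [Complex.normSq_apply] at h2
  nlinarith [h2]

lemma neg_one_le_re (z : TC) : -1 ≤ (z:ℂ).re := by
  nlinarith [re_sq_add_im_sq z, sq_nonneg ((z:ℂ).im), sq_nonneg ((z:ℂ).re + 1)]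

lemma re_le_one (z : TC) : (z:ℂ).re ≤ 1 := by
  nlinarith [re_sq_add_im_sq z, sq_nonneg ((z:ℂ).im), sq_nonneg ((z:ℂ).re - 1)]

def eC : C(unitInterval, TC) :=
  ⟨fun t => ⟨Complex.exp ((π * t : ℝ) * Complex.I), by
      rw [Complex.norm_exp_ofReal_mul_I]⟩, by
    apply Continuous.subtype_mk
    exact Complex.continuous_exp.comp (by continuity)⟩

def τ : TC → unitInterval := fun z =>
  ⟨Real.arccos (z:ℂ).re / π,
    div_nonneg (Real.arccos_nonneg _) Real.pi_pos.le,
    by rw [div_le_one Real.pi_pos]; exact Real.arccos_le_pi _⟩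

lemma continuous_τ : Continuous τ := by
  apply Continuous.subtype_mk
  exact (Real.continuous_arccos.comp (Complex.continuous_re.comp continuous_subtype_val)).div_const _

lemma eC_apply_val (t : unitInterval) :
    (eC t : ℂ) = Complex.exp ((π * t : ℝ) * Complex.I) := rfl

lemma eC_τ_re (z : TC) : (eC (τ z) : ℂ).re = (z:ℂ).re := by
  have h1 : (π * (τ z : ℝ) : ℝ) = Real.arccos (z:ℂ).re := by
    show π * (Real.arccos (z:ℂ).re / π) = _
    field_simp
  rw [eC_apply_val, Complex.exp_ofReal_mul_I_re, h1,
    Real.cos_arccos (neg_one_le_re z) (re_le_one z)]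

lemma eC_τ_im (z : TC) : (eC (τ z) : ℂ).im = |(z:ℂ).im| := by
  have h1 : (π * (τ z : ℝ) : ℝ) = Real.arccos (z:ℂ).re := by
    show π * (Real.arccos (z:ℂ).re / π) = _
    field_simp
  rw [eC_apply_val, Complex.exp_ofReal_mul_I_im, h1, Real.sin_arccos]
  have : 1 - (z:ℂ).re^2 = (z:ℂ).im^2 := by nlinarith [re_sq_add_im_sq z]
  rw [this, Real.sqrt_sq_eq_abs]

lemma eC_τ_of_nonneg (z : TC) (h : 0 ≤ (z:ℂ).im) : eC (τ z) = z := by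
  apply Subtype.ext
  apply Complex.ext
  · exact eC_τ_re z
  · rw [eC_τ_im z, _root_.abs_of_nonneg h]

lemma eC_τ_of_nonpos (z : TC) (h : (z:ℂ).im ≤ 0) :
    (eC (τ z) : ℂ) = starRingEnd ℂ (z:ℂ) := by
  apply Complex.ext
  · rw [eC_τ_re z, Complex.conj_re]
  · rw [eC_τ_im z, _root_.abs_of_nonpos h, Complex.conj_im]

lemma τ_eC (t : unitInterval) : τ (eC t) = t := by
  apply Subtype.ext
  show Real.arccos (eC t : ℂ).re / π = t
  rw [eC_apply_val, Complex.exp_ofReal_mul_I_re,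
    Real.arccos_cos (mul_nonneg Real.pi_pos.le t.2.1) (by nlinarith [t.2.2, Real.pi_pos])]
  field_simp

lemma eC_im_nonneg (t : unitInterval) : 0 ≤ (eC t : ℂ).im := by
  rw [eC_apply_val, Complex.exp_ofReal_mul_I_im]
  exact Real.sin_nonneg_of_nonneg_of_le_pi (mul_nonneg Real.pi_pos.le t.2.1)
    (by nlinarith [t.2.2, Real.pi_pos])

def Φf (a : Matrix (Fin 2) (Fin 2) C(TC, ℂ)) : C(unitInterval, Matrix (Fin 2) (Fin 2) ℂ) :=
  ⟨fun t => (2⁻¹:ℂ) • (V * (a.map fun g => g (eC t)) * V), by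
    refine Continuous.const_smul (g := fun t => V * (a.map fun g => g (eC t)) * V) ?_ (2⁻¹:ℂ)
    apply Continuous.matrix_mul (Continuous.matrix_mul continuous_const _) continuous_const
    exact continuous_matrix fun i j => (a i j).continuous.comp eC.continuous⟩

lemma Φf_apply (a : Matrix (Fin 2) (Fin 2) C(TC, ℂ)) (t : unitInterval) (i j : Fin 2) :
    Φf a t i j = (2⁻¹:ℂ) * (V * (a.map fun g => g (eC t)) * V) i j := rfl

lemma Φf_add (a b : Matrix (Fin 2) (Fin 2) C(TC, ℂ)) : Φf (a + b) = Φf a + Φf b := by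
  ext t i j
  fin_cases i <;> fin_cases j <;>
    simp [Φf_apply, V, Matrix.mul_apply, Fin.sum_univ_two, Matrix.map_apply, Matrix.vecMul,
      dotProduct] <;> ring

lemma Φf_mul (a b : Matrix (Fin 2) (Fin 2) C(TC, ℂ)) : Φf (a * b) = Φf a * Φf b := by
  ext t i j
  fin_cases i <;> fin_cases j <;>
    simp [Φf_apply, V, Matrix.mul_apply, Fin.sum_univ_two, Matrix.map_apply, Matrix.vecMul,
      dotProduct] <;> ring

lemma Φf_smul (r : ℂ) (a : Matrix (Fin 2) (Fin 2) C(TC, ℂ)) : Φf (r • a) = r • Φf a := by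
  ext t i j
  fin_cases i <;> fin_cases j <;>
    simp [Φf_apply, V, Matrix.mul_apply, Fin.sum_univ_two, Matrix.map_apply, Matrix.vecMul,
      dotProduct] <;> ring

lemma Φf_star (a : Matrix (Fin 2) (Fin 2) C(TC, ℂ)) : Φf (star a) = star (Φf a) := by
  ext t i j
  fin_cases i <;> fin_cases j <;>
    simp [Φf_apply, V, Matrix.mul_apply, Fin.sum_univ_two, Matrix.map_apply, Matrix.vecMul,
      dotProduct, Matrix.star_apply, ContinuousMap.star_apply, map_add] <;> ring

lemma Φf_one : Φf 1 = 1 := by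
  ext t i j
  fin_cases i <;> fin_cases j <;>
    simp [Φf_apply, V, Matrix.mul_apply, Fin.sum_univ_two, Matrix.map_apply, Matrix.vecMul,
      dotProduct, Matrix.one_apply] <;> ring

lemma τ_of_re_one (z : TC) (h : (z:ℂ).re = 1) : τ z = 0 := by
  apply Subtype.ext
  show Real.arccos (z:ℂ).re / π = 0
  rw [h, Real.arccos_one, zero_div]

lemma τ_of_re_neg_one (z : TC) (h : (z:ℂ).re = -1) : τ z = 1 := by
  apply Subtype.ext
  show Real.arccos (z:ℂ).re / π = 1
  rw [h, Real.arccos_neg_one, div_self Real.pi_ne_zero]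

lemma τ_boundary (z : TC) (h : (z:ℂ).im = 0) : τ z = 0 ∨ τ z = 1 := by
  have h2 := re_sq_add_im_sq z
  rw [h] at h2
  have : ((z:ℂ).re - 1) * ((z:ℂ).re + 1) = 0 := by nlinarith
  rcases mul_eq_zero.mp this with h3 | h3
  · exact Or.inl (τ_of_re_one z (by linarith))
  · exact Or.inr (τ_of_re_neg_one z (by linarith))

lemma τ_congr_re (z w : TC) (h : (w:ℂ).re = (z:ℂ).re) : τ w = τ z := by
  apply Subtype.ext
  show Real.arccos (w:ℂ).re / π = Real.arccos (z:ℂ).re / π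
  rw [h]

lemma eC_zero_im : ((eC 0 : TC) : ℂ).im = 0 := by
  show (Complex.exp _).im = 0
  rw [Complex.exp_ofReal_mul_I_im]
  norm_num

lemma eC_one_im : ((eC 1 : TC) : ℂ).im = 0 := by
  show (Complex.exp _).im = 0
  rw [Complex.exp_ofReal_mul_I_im]
  norm_num [Real.sin_pi]

section withc

variable (c : C(TC, TC)) (hc : ∀ z : TC, (c z : ℂ) = starRingEnd ℂ (z : ℂ))

include hc in
lemma c_fix (z : TC) (him : (z:ℂ).im = 0) : c z = z := by
  apply Subtype.ext
  rw [hc z]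
  apply Complex.ext
  · rw [Complex.conj_re]
  · rw [Complex.conj_im, him, neg_zero]

include hc in
lemma c_c (z : TC) : c (c z) = z := by
  apply Subtype.ext
  rw [hc, hc, Complex.conj_conj]

include hc in
lemma c_eC_τ_of_nonpos (z : TC) (h : (z:ℂ).im ≤ 0) : c (eC (τ z)) = z := by
  apply Subtype.ext
  rw [hc, eC_τ_of_nonpos z h, Complex.conj_conj]

include hc in
lemma phi_isDiag (f₀ f₁ : C(TC,ℂ)) (t : unitInterval) (hfix : c (eC t) = eC t) :
    (Φf !![f₀, f₁; f₁.comp c, f₀.comp c] t).IsDiag := by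
  intro i j hij
  fin_cases i <;> fin_cases j
  · exact absurd rfl hij
  · simp [Φf_apply, V, Matrix.mul_apply, Fin.sum_univ_two, Matrix.map_apply,
      Matrix.vecMul, dotProduct, ContinuousMap.comp_apply, hfix]
    ring
  · simp [Φf_apply, V, Matrix.mul_apply, Fin.sum_univ_two, Matrix.map_apply,
      Matrix.vecMul, dotProduct, ContinuousMap.comp_apply, hfix]
  · exact absurd rfl hij

include hc in
lemma eval_eq_of_Φf_eq (a b : Matrix (Fin 2) (Fin 2) C(TC, ℂ)) (h : Φf a = Φf b)
    (t : unitInterval) (i j : Fin 2) : (a i j) (eC t) = (b i j) (eC t) := by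
  have e : ∀ i j : Fin 2, Φf a t i j = Φf b t i j := fun i j => by rw [h]
  have e00 := e 0 0
  have e01 := e 0 1
  have e10 := e 1 0
  have e11 := e 1 1
  simp only [Φf_apply, V, Matrix.mul_apply, Fin.sum_univ_two, Matrix.map_apply,
    Matrix.vecMul, dotProduct, Matrix.cons_val_zero, Matrix.cons_val_one,
    Matrix.head_cons, Matrix.cons_val', Matrix.empty_val', Matrix.cons_val_fin_one,
    Matrix.head_fin_const, Matrix.of_apply] at e00 e01 e10 e11
  fin_cases i <;> fin_cases j <;> simp only [Fin.zero_eta, Fin.mk_one]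
  · linear_combination (2⁻¹:ℂ) * e00 + (2⁻¹:ℂ) * e01 + (2⁻¹:ℂ) * e10 + (2⁻¹:ℂ) * e11
  · linear_combination (2⁻¹:ℂ) * e00 - (2⁻¹:ℂ) * e01 + (2⁻¹:ℂ) * e10 - (2⁻¹:ℂ) * e11
  · linear_combination (2⁻¹:ℂ) * e00 + (2⁻¹:ℂ) * e01 - (2⁻¹:ℂ) * e10 - (2⁻¹:ℂ) * e11
  · linear_combination (2⁻¹:ℂ) * e00 - (2⁻¹:ℂ) * e01 - (2⁻¹:ℂ) * e10 + (2⁻¹:ℂ) * e11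

include hc in
lemma surj (f : C(unitInterval, Matrix (Fin 2) (Fin 2) ℂ))
    (h0 : (f 0).IsDiag) (h1 : (f 1).IsDiag) :
    ∃ f₀ f₁ : C(TC, ℂ), Φf !![f₀, f₁; f₁.comp c, f₀.comp c] = f := by
  set g : unitInterval → Matrix (Fin 2) (Fin 2) ℂ := fun t => (2⁻¹:ℂ) • (V * f t * V) with hg
  have hgc : Continuous g := by
    refine Continuous.const_smul (g := fun t => V * f t * V) ?_ (2⁻¹:ℂ)
    exact Continuous.matrix_mul (Continuous.matrix_mul continuous_const f.continuous)
      continuous_const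
  have hf001 : f 0 0 1 = 0 := h0 (by decide)
  have hf010 : f 0 1 0 = 0 := h0 (by decide)
  have hf101 : f 1 0 1 = 0 := h1 (by decide)
  have hf110 : f 1 1 0 = 0 := h1 (by decide)
  have key : ∀ e : unitInterval, f e 0 1 = 0 → f e 1 0 = 0 →
      (g e 0 0 = g e 1 1 ∧ g e 0 1 = g e 1 0) := by
    intro e he1 he2
    constructor <;>
    · simp [hg, V, Matrix.smul_apply, Matrix.mul_apply, Fin.sum_univ_two,
        Matrix.vecMul, dotProduct, he1, he2]
  obtain ⟨hA0, hB0⟩ := key 0 hf001 hf010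
  obtain ⟨hA1, hB1⟩ := key 1 hf101 hf110
  have hbd00 : ∀ z : TC, (0:ℝ) = (z:ℂ).im → g (τ z) 0 0 = g (τ z) 1 1 := by
    intro z hz
    rcases τ_boundary z hz.symm with h | h <;> rw [h]
    exacts [hA0, hA1]
  have hbd01 : ∀ z : TC, (0:ℝ) = (z:ℂ).im → g (τ z) 0 1 = g (τ z) 1 0 := by
    intro z hz
    rcases τ_boundary z hz.symm with h | h <;> rw [h]
    exacts [hB0, hB1]
  have hentry : ∀ i j : Fin 2, Continuous fun z : TC => g (τ z) i j := by
    intro i j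
    exact ((continuous_apply j).comp ((continuous_apply i).comp
      (hgc.comp continuous_τ)))
  set f₀ : C(TC, ℂ) := ⟨fun z => if (0:ℝ) ≤ (z:ℂ).im then g (τ z) 0 0 else g (τ z) 1 1,
    Continuous.if_le (hentry 0 0) (hentry 1 1) continuous_const
      (Complex.continuous_im.comp continuous_subtype_val) hbd00⟩ with hf₀
  set f₁ : C(TC, ℂ) := ⟨fun z => if (0:ℝ) ≤ (z:ℂ).im then g (τ z) 0 1 else g (τ z) 1 0,
    Continuous.if_le (hentry 0 1) (hentry 1 0) continuous_const
      (Complex.continuous_im.comp continuous_subtype_val) hbd01⟩ with hf₁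
  refine ⟨f₀, f₁, ?_⟩
  have hcongr : ∀ t : unitInterval, τ (c (eC t)) = t := by
    intro t
    rw [τ_congr_re (eC t) (c (eC t)) (by rw [hc]; exact Complex.conj_re _), τ_eC]
  have hcim : ∀ t : unitInterval, ((c (eC t) : TC) : ℂ).im = -(eC t : ℂ).im := by
    intro t; rw [hc]; exact Complex.conj_im _
  have hev₀ : ∀ t : unitInterval, f₀ (eC t) = g t 0 0 := by
    intro t
    show (if (0:ℝ) ≤ (eC t : ℂ).im then g (τ (eC t)) 0 0 else g (τ (eC t)) 1 1) = g t 0 0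
    rw [if_pos (eC_im_nonneg t), τ_eC]
  have hev₁ : ∀ t : unitInterval, f₁ (eC t) = g t 0 1 := by
    intro t
    show (if (0:ℝ) ≤ (eC t : ℂ).im then g (τ (eC t)) 0 1 else g (τ (eC t)) 1 0) = g t 0 1
    rw [if_pos (eC_im_nonneg t), τ_eC]
  have hev₀c : ∀ t : unitInterval, f₀ (c (eC t)) = g t 1 1 := by
    intro t
    show (if (0:ℝ) ≤ ((c (eC t) : TC) : ℂ).im then g (τ (c (eC t))) 0 0
        else g (τ (c (eC t))) 1 1) = g t 1 1
    rw [hcongr t]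
    by_cases ht : (0:ℝ) ≤ ((c (eC t) : TC) : ℂ).im
    · rw [if_pos ht]
      have him0 : (eC t : ℂ).im = 0 := by
        have := hcim t
        have h2 := eC_im_nonneg t
        rw [this] at ht; linarith
      rcases τ_boundary (eC t) him0 with h | h <;>
        · rw [τ_eC] at h; rw [h]; first | exact hA0 | exact hA1
    · rw [if_neg ht]
  have hev₁c : ∀ t : unitInterval, f₁ (c (eC t)) = g t 1 0 := by
    intro t
    show (if (0:ℝ) ≤ ((c (eC t) : TC) : ℂ).im then g (τ (c (eC t))) 0 1
        else g (τ (c (eC t))) 1 0) = g t 1 0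
    rw [hcongr t]
    by_cases ht : (0:ℝ) ≤ ((c (eC t) : TC) : ℂ).im
    · rw [if_pos ht]
      have him0 : (eC t : ℂ).im = 0 := by
        have := hcim t
        have h2 := eC_im_nonneg t
        rw [this] at ht; linarith
      rcases τ_boundary (eC t) him0 with h | h <;>
        · rw [τ_eC] at h; rw [h]; first | exact hB0 | exact hB1
    · rw [if_neg ht]
  ext t i j
  have e00 := hev₀ t
  have e01 := hev₁ t
  have e10 := hev₁c t
  have e11 := hev₀c t
  have hgexp : ∀ i j : Fin 2, g t i j = 2⁻¹ * (V * f t * V) i j := fun i j => rfl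
  fin_cases i <;> fin_cases j <;>
    · simp only [Fin.zero_eta, Fin.mk_one]
      rw [Φf_apply]
      simp only [V, Matrix.mul_apply, Fin.sum_univ_two, Matrix.map_apply,
        Matrix.vecMul, dotProduct, Matrix.cons_val_zero, Matrix.cons_val_one,
        Matrix.head_cons, Matrix.cons_val', Matrix.empty_val', Matrix.cons_val_fin_one,
        Matrix.head_fin_const, Matrix.of_apply, ContinuousMap.comp_apply]
      rw [e00, e01, e10, e11]
      simp only [hgexp, V, Matrix.mul_apply, Fin.sum_univ_two,
        Matrix.vecMul, dotProduct, Matrix.cons_val_zero, Matrix.cons_val_one,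
        Matrix.head_cons, Matrix.cons_val', Matrix.empty_val', Matrix.cons_val_fin_one,
        Matrix.head_fin_const, Matrix.of_apply]
      ring

end withc

end Stmt16

end Stmt16Aux

open Stmt16

/-- with `T` the unit circle and `c(z) = z̄`, the set `D` of matrices
`[[f₀, f₁],[f₁∘c, f₀∘c]]` is a unital star-subalgebra of `M₂(C(T,ℂ))`, and `D` is
star-isomorphic to `B = {f ∈ C([0,1], M₂(ℂ)) : f(0), f(1) diagonal}`. -/
theorem stmt_16
    (c : C({z : ℂ // ‖z‖ = 1}, {z : ℂ // ‖z‖ = 1}))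
    (hc : ∀ z : {z : ℂ // ‖z‖ = 1}, (c z : ℂ) = starRingEnd ℂ (z : ℂ))
    (D : Set (Matrix (Fin 2) (Fin 2) C({z : ℂ // ‖z‖ = 1}, ℂ)))
    (hD : D = {a | ∃ f₀ f₁ : C({z : ℂ // ‖z‖ = 1}, ℂ),
      a = !![f₀, f₁; f₁.comp c, f₀.comp c]})
    (B : Set C(unitInterval, Matrix (Fin 2) (Fin 2) ℂ))
    (hB : B = {f | (f 0).IsDiag ∧ (f 1).IsDiag}) :
    -- D is a unital star-subalgebra of M₂(C(T,ℂ)):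
    ((1 : Matrix (Fin 2) (Fin 2) C({z : ℂ // ‖z‖ = 1}, ℂ)) ∈ D ∧
     (∀ a b, a ∈ D → b ∈ D → a + b ∈ D) ∧
     (∀ a b, a ∈ D → b ∈ D → a * b ∈ D) ∧
     (∀ (r : ℂ) a, a ∈ D → r • a ∈ D) ∧
     (∀ a, a ∈ D → star a ∈ D)) ∧
    -- D is star-isomorphic to B:
    ∃ Φ : Matrix (Fin 2) (Fin 2) C({z : ℂ // ‖z‖ = 1}, ℂ) →
        C(unitInterval, Matrix (Fin 2) (Fin 2) ℂ),
      (∀ a ∈ D, Φ a ∈ B) ∧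
      (∀ b ∈ B, ∃ a ∈ D, Φ a = b) ∧
      (∀ a b, a ∈ D → b ∈ D → Φ a = Φ b → a = b) ∧
      (∀ a b, a ∈ D → b ∈ D → Φ (a + b) = Φ a + Φ b) ∧
      (∀ a b, a ∈ D → b ∈ D → Φ (a * b) = Φ a * Φ b) ∧
      (∀ (r : ℂ) a, a ∈ D → Φ (r • a) = r • Φ a) ∧
      (∀ a, a ∈ D → Φ (star a) = star (Φ a)) ∧
      Φ 1 = 1 := by
  subst hD hB
  have hcc : ∀ z : {z : ℂ // ‖z‖ = 1}, c (c z) = z := c_c c hc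
  constructor
  · refine ⟨⟨1, 0, ?_⟩, ?_, ?_, ?_, ?_⟩
    · ext i j z
      fin_cases i <;> fin_cases j <;>
        simp [Matrix.one_apply, ContinuousMap.comp_apply]
    · rintro a b ⟨f₀, f₁, rfl⟩ ⟨g₀, g₁, rfl⟩
      refine ⟨f₀ + g₀, f₁ + g₁, ?_⟩
      ext i j z
      fin_cases i <;> fin_cases j <;>
        simp [ContinuousMap.comp_apply]
    · rintro a b ⟨f₀, f₁, rfl⟩ ⟨g₀, g₁, rfl⟩
      refine ⟨f₀ * g₀ + f₁ * (g₁.comp c), f₀ * g₁ + f₁ * (g₀.comp c), ?_⟩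
      ext i j z
      fin_cases i <;> fin_cases j <;>
        (simp [Matrix.mul_apply, Fin.sum_univ_two, ContinuousMap.comp_apply] <;>
          (try erw [hcc z]) <;> (try ring))
    · rintro r a ⟨f₀, f₁, rfl⟩
      refine ⟨r • f₀, r • f₁, ?_⟩
      ext i j z
      fin_cases i <;> fin_cases j <;>
        simp [ContinuousMap.comp_apply]
    · rintro a ⟨f₀, f₁, rfl⟩
      refine ⟨star f₀, (star f₁).comp c, ?_⟩
      ext i j z
      fin_cases i <;> fin_cases j <;>
        (simp [Matrix.star_apply, ContinuousMap.comp_apply] <;> (try erw [hcc z]))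
  · refine ⟨Φf, ?_, ?_, ?_, fun a b _ _ => Φf_add a b, fun a b _ _ => Φf_mul a b,
      fun r a _ => Φf_smul r a, fun a _ => Φf_star a, Φf_one⟩
    · rintro a ⟨f₀, f₁, rfl⟩
      exact ⟨phi_isDiag c hc f₀ f₁ 0 (c_fix c hc _ eC_zero_im),
        phi_isDiag c hc f₀ f₁ 1 (c_fix c hc _ eC_one_im)⟩
    · rintro b ⟨h0, h1⟩
      obtain ⟨f₀, f₁, hΦ⟩ := surj c hc b h0 h1
      exact ⟨_, ⟨f₀, f₁, rfl⟩, hΦ⟩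
    · rintro a b ⟨f₀, f₁, rfl⟩ ⟨g₀, g₁, rfl⟩ h
      have hev := eval_eq_of_Φf_eq c hc _ _ h
      have h00 : ∀ t, f₀ (eC t) = g₀ (eC t) := by
        intro t; have := hev t 0 0; simpa using this
      have h01 : ∀ t, f₁ (eC t) = g₁ (eC t) := by
        intro t; have := hev t 0 1; simpa using this
      have h10 : ∀ t, f₁ (c (eC t)) = g₁ (c (eC t)) := by
        intro t; have := hev t 1 0; simpa using this
      have h11 : ∀ t, f₀ (c (eC t)) = g₀ (c (eC t)) := by
        intro t; have := hev t 1 1; simpa using this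
      have hf0 : f₀ = g₀ := by
        ext z
        rcases le_or_gt 0 (z:ℂ).im with him | him
        · have := h00 (τ z)
          rwa [eC_τ_of_nonneg z him] at this
        · have := h11 (τ z)
          rwa [c_eC_τ_of_nonpos c hc z him.le] at this
      have hf1 : f₁ = g₁ := by
        ext z
        rcases le_or_gt 0 (z:ℂ).im with him | him
        · have := h01 (τ z)
          rwa [eC_τ_of_nonneg z him] at this
        · have := h10 (τ z)
          rwa [c_eC_τ_of_nonpos c hc z him.le] at this
      rw [hf0, hf1]
end

section
/- Let θ₁ : [0,2] → [0,2] be θ₁(t) = 2 − t, and let D be the set of all 2×2 matrices over C([0,2],ℂ) of the form [[f₀, f₁],[f₁∘θ₁, f₀∘θ₁]] with f₀, f₁ ∈ C([0,2],ℂ). Then D is a unital star-subalgebra of M₂(C([0,2],ℂ)) and D is star-isomorphic to the algebra A(1) = {f ∈ C([0,1], M₂(ℂ)) : f(1) is a diagonal matrix}. -/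
open Matrix

noncomputable def uu : Matrix (Fin 2) (Fin 2) ℂ := ((Real.sqrt 2 : ℂ))⁻¹ • !![1,1;1,-1]

lemma sqrt2_sq : ((Real.sqrt 2 : ℂ)) * (Real.sqrt 2 : ℂ) = 2 := by
  norm_cast; rw [Real.mul_self_sqrt (by norm_num)]

lemma inv_sqrt2_sq : ((Real.sqrt 2 : ℂ))⁻¹ * ((Real.sqrt 2 : ℂ))⁻¹ = 2⁻¹ := by
  rw [← mul_inv, sqrt2_sq]

lemma uu_mul_uu : uu * uu = 1 := by
  have h : ((Real.sqrt 2 : ℂ))⁻¹ * ((Real.sqrt 2 : ℂ))⁻¹ = 2⁻¹ := by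
    rw [← mul_inv, sqrt2_sq]
  unfold uu
  rw [Matrix.smul_mul, Matrix.mul_smul, smul_smul, h]
  ext i j
  fin_cases i <;> fin_cases j <;>
    simp [Matrix.mul_apply, Fin.sum_univ_two, Matrix.one_apply] <;> ring

lemma uu_conj_conj (M : Matrix (Fin 2) (Fin 2) ℂ) : uu * (uu * M * uu) * uu = M := by
  have : uu * (uu * M * uu) * uu = (uu * uu) * M * (uu * uu) := by noncomm_ring
  rw [this, uu_mul_uu, one_mul, mul_one]

lemma uu_circ (p q : ℂ) : uu * !![p, q; q, p] * uu = !![p + q, 0; 0, p - q] := by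
  unfold uu
  simp only [Matrix.smul_mul, Matrix.mul_smul, smul_smul, inv_sqrt2_sq]
  ext i j
  fin_cases i <;> fin_cases j <;>
    simp [Matrix.mul_apply, Fin.sum_univ_two] <;> ring

-- circulant structure of uu * d * uu when d is diagonal
lemma uu_diag_circ (d : Matrix (Fin 2) (Fin 2) ℂ) (h01 : d 0 1 = 0) (h10 : d 1 0 = 0) :
    (uu * d * uu) 0 0 = (uu * d * uu) 1 1 ∧ (uu * d * uu) 0 1 = (uu * d * uu) 1 0 := by
  unfold uu
  simp only [Matrix.smul_mul, Matrix.mul_smul, smul_smul, inv_sqrt2_sq]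
  constructor <;>
    simp [Matrix.mul_apply, Matrix.vecMul, dotProduct, Fin.sum_univ_two, h01, h10] <;>
      ring

lemma uu_star : star uu = uu := by
  unfold uu
  rw [star_smul]
  congr 1
  · simp [Complex.ext_iff]
  · ext i j
    fin_cases i <;> fin_cases j <;> simp [star_apply]

noncomputable def incl : C(unitInterval, Set.Icc (0:ℝ) 2) :=
  ⟨fun s => ⟨s, s.2.1, le_trans s.2.2 one_le_two⟩,
    Continuous.subtype_mk continuous_subtype_val _⟩

noncomputable def ev (s : unitInterval) (a : Matrix (Fin 2) (Fin 2) C(Set.Icc (0:ℝ) 2, ℂ)) :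
    Matrix (Fin 2) (Fin 2) ℂ := Matrix.of fun i j => a i j (incl s)

lemma ev_mul (s : unitInterval) (a b : Matrix (Fin 2) (Fin 2) C(Set.Icc (0:ℝ) 2, ℂ)) :
    ev s (a * b) = ev s a * ev s b := by
  ext i j; simp [ev, Matrix.mul_apply, Fin.sum_univ_two]

lemma ev_add (s : unitInterval) (a b : Matrix (Fin 2) (Fin 2) C(Set.Icc (0:ℝ) 2, ℂ)) :
    ev s (a + b) = ev s a + ev s b := by ext i j; simp [ev]

lemma ev_smul (s : unitInterval) (r : ℂ) (a : Matrix (Fin 2) (Fin 2) C(Set.Icc (0:ℝ) 2, ℂ)) :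
    ev s (r • a) = r • ev s a := by ext i j; simp [ev]

lemma ev_star (s : unitInterval) (a : Matrix (Fin 2) (Fin 2) C(Set.Icc (0:ℝ) 2, ℂ)) :
    ev s (star a) = star (ev s a) := by ext i j; simp [ev, Matrix.star_apply]

lemma ev_one (s : unitInterval) :
    ev s (1 : Matrix (Fin 2) (Fin 2) C(Set.Icc (0:ℝ) 2, ℂ)) = 1 := by
  ext i j; simp [ev, Matrix.one_apply]; split <;> simp

noncomputable def Phi (a : Matrix (Fin 2) (Fin 2) C(Set.Icc (0:ℝ) 2, ℂ)) :
    C(unitInterval, Matrix (Fin 2) (Fin 2) ℂ) :=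
  ⟨fun s => uu * ev s a * uu, by
    apply Continuous.matrix_mul
    apply Continuous.matrix_mul continuous_const
    · exact continuous_matrix fun i j => (a i j).continuous.comp incl.continuous
    · exact continuous_const⟩

lemma Phi_apply (a : Matrix (Fin 2) (Fin 2) C(Set.Icc (0:ℝ) 2, ℂ)) (s : unitInterval) :
    Phi a s = uu * ev s a * uu := rfl


/-- with `θ₁ : [0,2] → [0,2]`, `θ₁(t) = 2 - t`, the set `D` of matrices
`[[f₀, f₁],[f₁∘θ₁, f₀∘θ₁]]` is a unital star-subalgebra of `M₂(C([0,2],ℂ))`, and `D`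
is star-isomorphic to `A(1) = {f ∈ C([0,1], M₂(ℂ)) : f(1) diagonal}`. -/
theorem stmt_19
    (θ₁ : C(Set.Icc (0 : ℝ) 2, Set.Icc (0 : ℝ) 2))
    (hθ₁ : ∀ t : Set.Icc (0 : ℝ) 2, (θ₁ t : ℝ) = 2 - (t : ℝ))
    (D : Set (Matrix (Fin 2) (Fin 2) C(Set.Icc (0 : ℝ) 2, ℂ)))
    (hD : D = {a | ∃ f₀ f₁ : C(Set.Icc (0 : ℝ) 2, ℂ),
      a = !![f₀, f₁; f₁.comp θ₁, f₀.comp θ₁]})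
    (A1 : Set C(unitInterval, Matrix (Fin 2) (Fin 2) ℂ))
    (hA1 : A1 = {f | (f 1).IsDiag}) :
    -- D is a unital star-subalgebra of M₂(C([0,2],ℂ)):
    ((1 : Matrix (Fin 2) (Fin 2) C(Set.Icc (0 : ℝ) 2, ℂ)) ∈ D ∧
     (∀ a b, a ∈ D → b ∈ D → a + b ∈ D) ∧
     (∀ a b, a ∈ D → b ∈ D → a * b ∈ D) ∧
     (∀ (r : ℂ) a, a ∈ D → r • a ∈ D) ∧
     (∀ a, a ∈ D → star a ∈ D)) ∧
    -- D is star-isomorphic to A(1):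
    ∃ Φ : Matrix (Fin 2) (Fin 2) C(Set.Icc (0 : ℝ) 2, ℂ) →
        C(unitInterval, Matrix (Fin 2) (Fin 2) ℂ),
      (∀ a ∈ D, Φ a ∈ A1) ∧
      (∀ b ∈ A1, ∃ a ∈ D, Φ a = b) ∧
      (∀ a b, a ∈ D → b ∈ D → Φ a = Φ b → a = b) ∧
      (∀ a b, a ∈ D → b ∈ D → Φ (a + b) = Φ a + Φ b) ∧
      (∀ a b, a ∈ D → b ∈ D → Φ (a * b) = Φ a * Φ b) ∧
      (∀ (r : ℂ) a, a ∈ D → Φ (r • a) = r • Φ a) ∧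
      (∀ a, a ∈ D → Φ (star a) = star (Φ a)) ∧
      Φ 1 = 1 := by
  subst hD hA1
  -- θ₁ is an involution
  have hθθ : ∀ t, θ₁ (θ₁ t) = t := by
    intro t; apply Subtype.ext; rw [hθ₁, hθ₁]; ring
  have hcompθθ : ∀ g : C(Set.Icc (0:ℝ) 2, ℂ), (g.comp θ₁).comp θ₁ = g := by
    intro g; ext t; simp [hθθ]
  constructor
  · refine ⟨⟨1, 0, ?_⟩, ?_, ?_, ?_, ?_⟩
    · ext i j
      fin_cases i <;> fin_cases j <;>
        simp [Matrix.one_apply, ContinuousMap.ext_iff]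
    · rintro a b ⟨f₀, f₁, rfl⟩ ⟨g₀, g₁, rfl⟩
      exact ⟨f₀ + g₀, f₁ + g₁, by
        ext i j
        fin_cases i <;> fin_cases j <;> simp [ContinuousMap.add_comp]⟩
    · rintro a b ⟨f₀, f₁, rfl⟩ ⟨g₀, g₁, rfl⟩
      refine ⟨f₀ * g₀ + f₁ * (g₁.comp θ₁), f₀ * g₁ + f₁ * (g₀.comp θ₁), ?_⟩
      ext i j
      fin_cases i <;> fin_cases j <;>
        simp [Matrix.mul_apply, Fin.sum_univ_two, ContinuousMap.add_comp,
          ContinuousMap.mul_comp, hcompθθ] <;> ring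
    · rintro r a ⟨f₀, f₁, rfl⟩
      exact ⟨r • f₀, r • f₁, by
        ext i j
        fin_cases i <;> fin_cases j <;> simp [ContinuousMap.smul_comp]⟩
    · rintro a ⟨f₀, f₁, rfl⟩
      refine ⟨star f₀, (star f₁).comp θ₁, ?_⟩
      ext i j
      fin_cases i <;> fin_cases j <;>
        simp [Matrix.star_apply, hcompθθ, ContinuousMap.ext_iff, hθθ]
  · refine ⟨Phi, ?_, ?_, ?_, ?_, ?_, ?_, ?_, ?_⟩
    · -- maps into A1
      rintro a ⟨f₀, f₁, rfl⟩
      simp only [Set.mem_setOf_eq]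
      have hθ1 : θ₁ (incl 1) = incl 1 := by
        apply Subtype.ext
        rw [hθ₁]
        show 2 - ((incl 1 : Set.Icc (0:ℝ) 2) : ℝ) = _
        norm_num [incl]
      have hev : ev 1 !![f₀, f₁; f₁.comp θ₁, f₀.comp θ₁] =
          !![f₀ (incl 1), f₁ (incl 1); f₁ (incl 1), f₀ (incl 1)] := by
        ext i j
        fin_cases i <;> fin_cases j <;> simp [ev, hθ1]
      rw [Phi_apply, hev, uu_circ]
      intro i j hij
      fin_cases i <;> fin_cases j <;> simp_all
    · -- surjective
      intro b hb
      simp only [Set.mem_setOf_eq] at hb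
      set c : ℝ → Matrix (Fin 2) (Fin 2) ℂ :=
        fun x => uu * b (Set.projIcc 0 1 zero_le_one x) * uu with hcdef
      have hccont : Continuous c :=
        Continuous.matrix_mul
          (Continuous.matrix_mul continuous_const
            (b.continuous.comp continuous_projIcc)) continuous_const
      have hproj1 : Set.projIcc (0:ℝ) 1 zero_le_one 1 = 1 := by
        rw [Set.projIcc_of_mem zero_le_one (by norm_num : (1:ℝ) ∈ Set.Icc (0:ℝ) 1)]
        rfl
      have hc1 : c 1 = uu * b 1 * uu := by rw [hcdef]; simp [hproj1]
      have hkey := uu_diag_circ (b 1) (hb (by decide : (0 : Fin 2) ≠ 1))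
        (hb (by decide : (1 : Fin 2) ≠ 0))
      have key1 : c 1 0 0 = c 1 1 1 := by rw [hc1]; exact hkey.1
      have key2 : c 1 0 1 = c 1 1 0 := by rw [hc1]; exact hkey.2
      have hcont0 : Continuous fun t : Set.Icc (0:ℝ) 2 =>
          if (t : ℝ) ≤ 1 then c t 0 0 else c (2 - t) 1 1 := by
        apply Continuous.if_le
        · exact (hccont.comp continuous_subtype_val).matrix_elem 0 0
        · exact (hccont.comp (continuous_const.sub continuous_subtype_val)).matrix_elem 1 1
        · exact continuous_subtype_val
        · exact continuous_const
        · intro t ht; rw [ht]; norm_num; rw [key1]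
      have hcont1 : Continuous fun t : Set.Icc (0:ℝ) 2 =>
          if (t : ℝ) ≤ 1 then c t 0 1 else c (2 - t) 1 0 := by
        apply Continuous.if_le
        · exact (hccont.comp continuous_subtype_val).matrix_elem 0 1
        · exact (hccont.comp (continuous_const.sub continuous_subtype_val)).matrix_elem 1 0
        · exact continuous_subtype_val
        · exact continuous_const
        · intro t ht; rw [ht]; norm_num; rw [key2]
      set f₀ : C(Set.Icc (0:ℝ) 2, ℂ) := ⟨_, hcont0⟩ with hf₀
      set f₁ : C(Set.Icc (0:ℝ) 2, ℂ) := ⟨_, hcont1⟩ with hf₁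
      refine ⟨!![f₀, f₁; f₁.comp θ₁, f₀.comp θ₁], ⟨f₀, f₁, rfl⟩, ?_⟩
      refine ContinuousMap.ext fun s => ?_
      have hth : ((θ₁ (incl s)) : ℝ) = 2 - (s : ℝ) := by
        rw [hθ₁]; rfl
      have hev : ev s !![f₀, f₁; f₁.comp θ₁, f₀.comp θ₁] = c (s : ℝ) := by
        ext i j
        fin_cases i <;> fin_cases j
        · show f₀ (incl s) = c (s : ℝ) 0 0
          rw [hf₀]
          show (if ((incl s : Set.Icc (0:ℝ) 2) : ℝ) ≤ 1 then _ else _) = _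
          rw [if_pos (show ((incl s : Set.Icc (0:ℝ) 2) : ℝ) ≤ 1 from s.2.2)]
          rfl
        · show f₁ (incl s) = c (s : ℝ) 0 1
          rw [hf₁]
          show (if ((incl s : Set.Icc (0:ℝ) 2) : ℝ) ≤ 1 then _ else _) = _
          rw [if_pos (show ((incl s : Set.Icc (0:ℝ) 2) : ℝ) ≤ 1 from s.2.2)]
          rfl
        · show f₁ (θ₁ (incl s)) = c (s : ℝ) 1 0
          rw [hf₁]
          show (if ((θ₁ (incl s)) : ℝ) ≤ 1 then c ((θ₁ (incl s)) : ℝ) 0 1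
              else c (2 - ((θ₁ (incl s)) : ℝ)) 1 0) = _
          rw [hth]
          by_cases hle : 2 - (s : ℝ) ≤ 1
          · have hs1 : (s : ℝ) = 1 := le_antisymm s.2.2 (by linarith)
            rw [if_pos hle, hs1]
            norm_num
            rw [key2]
          · rw [if_neg hle]
            norm_num
        · show f₀ (θ₁ (incl s)) = c (s : ℝ) 1 1
          rw [hf₀]
          show (if ((θ₁ (incl s)) : ℝ) ≤ 1 then c ((θ₁ (incl s)) : ℝ) 0 0
              else c (2 - ((θ₁ (incl s)) : ℝ)) 1 1) = _
          rw [hth]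
          by_cases hle : 2 - (s : ℝ) ≤ 1
          · have hs1 : (s : ℝ) = 1 := le_antisymm s.2.2 (by linarith)
            rw [if_pos hle, hs1]
            norm_num
            rw [key1]
          · rw [if_neg hle]
            norm_num
      rw [Phi_apply, hev]
      have hps : Set.projIcc (0:ℝ) 1 zero_le_one (s : ℝ) = s :=
        Set.projIcc_of_mem zero_le_one s.2
      show uu * (uu * b (Set.projIcc (0:ℝ) 1 zero_le_one (s : ℝ)) * uu) * uu = b s
      rw [hps]
      exact uu_conj_conj (b s)
    · -- injective
      rintro a b ⟨f₀, f₁, rfl⟩ ⟨g₀, g₁, rfl⟩ h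
      have hev : ∀ s : unitInterval,
          ev s !![f₀, f₁; f₁.comp θ₁, f₀.comp θ₁] =
          ev s !![g₀, g₁; g₁.comp θ₁, g₀.comp θ₁] := by
        intro s
        have h2 : uu * ev s !![f₀, f₁; f₁.comp θ₁, f₀.comp θ₁] * uu =
            uu * ev s !![g₀, g₁; g₁.comp θ₁, g₀.comp θ₁] * uu :=
          ContinuousMap.congr_fun h s
        have h3 := congrArg (fun M => uu * M * uu) h2
        simpa only [uu_conj_conj] using h3
      have h00 : ∀ s : unitInterval, f₀ (incl s) = g₀ (incl s) := by
        intro s; have := congrFun (congrFun (hev s) 0) 0; simpa [ev] using this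
      have h01 : ∀ s : unitInterval, f₁ (incl s) = g₁ (incl s) := by
        intro s; have := congrFun (congrFun (hev s) 0) 1; simpa [ev] using this
      have h10 : ∀ s : unitInterval, f₁ (θ₁ (incl s)) = g₁ (θ₁ (incl s)) := by
        intro s; have := congrFun (congrFun (hev s) 1) 0; simpa [ev] using this
      have h11 : ∀ s : unitInterval, f₀ (θ₁ (incl s)) = g₀ (θ₁ (incl s)) := by
        intro s; have := congrFun (congrFun (hev s) 1) 1; simpa [ev] using this
      have key : ∀ (f g : C(Set.Icc (0:ℝ) 2, ℂ)),
          (∀ s : unitInterval, f (incl s) = g (incl s)) →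
          (∀ s : unitInterval, f (θ₁ (incl s)) = g (θ₁ (incl s))) → f = g := by
        intro f g e1 e2
        ext t
        rcases le_or_gt (t : ℝ) 1 with ht | ht
        · exact e1 ⟨t, t.2.1, ht⟩
        · have hs : (2 - (t : ℝ)) ∈ unitInterval :=
            ⟨by linarith [t.2.2], by linarith⟩
          have h4 := e2 ⟨2 - (t : ℝ), hs⟩
          have h5 : θ₁ (incl ⟨2 - (t : ℝ), hs⟩) = t := by
            apply Subtype.ext
            rw [hθ₁]
            show 2 - ((incl ⟨2 - (t : ℝ), hs⟩ : Set.Icc (0:ℝ) 2) : ℝ) = _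
            show 2 - (2 - (t : ℝ)) = _
            ring
          rwa [h5] at h4
      rw [key f₀ g₀ h00 h11, key f₁ g₁ h01 h10]
    · intro a b _ _; ext s; simp [Phi_apply, ev_add, Matrix.mul_add, Matrix.add_mul]
    · intro a b _ _
      refine ContinuousMap.ext fun s => ?_
      simp only [Phi_apply, ev_mul, ContinuousMap.mul_apply]
      calc uu * (ev s a * ev s b) * uu
          = uu * ev s a * (uu * uu) * ev s b * uu := by rw [uu_mul_uu]; noncomm_ring
        _ = uu * ev s a * uu * (uu * ev s b * uu) := by noncomm_ring
    · intro r a _; ext s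
      simp [Phi_apply, ev_smul, Matrix.smul_mul, Matrix.mul_smul]
    · intro a _
      refine ContinuousMap.ext fun s => ?_
      simp only [Phi_apply, ev_star, ContinuousMap.star_apply]
      rw [Matrix.star_mul, Matrix.star_mul, uu_star, mul_assoc]
    · refine ContinuousMap.ext fun s => ?_
      simp [Phi_apply, ev_one, uu_mul_uu]
end
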